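/- arXiv:2001.01444 — 10 statements merged into one kernel-verified Lean document; each statement's English description precedes it below -/
import Mathlib

section
/- Let f be a C^3 function on an open disk with f_xx f_yy - f_xy^2 = 0 everywhere and f_xx ≠ 0, f_yy ≠ 0 at a point p. Then there exist ε > 0 and a nonzero vector (u,v) with u = f_yy(p), v = -f_xy(p) (up to normalization) such that the line segment t ↦ (p + t(u,v)) for t ∈ (-ε,ε) stays in the disk and the tangent plane of the graph of f is constant along this segment; in particular the graph contains the segment t ↦ (p + t(u,v), f(p) + t(f_x(p)u + f_y(p)v)). -/
open Real Set

noncomputable def pdx (f : ℝ → ℝ → ℝ) : ℝ → ℝ → ℝ := fun x y => deriv (fun s => f s y) x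
noncomputable def pdy (f : ℝ → ℝ → ℝ) : ℝ → ℝ → ℝ := fun x y => deriv (fun s => f x s) y

section helpers
variable {α : Type*} [NormedAddCommGroup α] [NormedSpace ℝ α]

lemma lin2 (L : (ℝ × ℝ) →L[ℝ] α) (u v : ℝ) :
    L (u, v) = u • L (1, 0) + v • L (0, 1) := by
  have h : ((u, v) : ℝ × ℝ) = u • ((1 : ℝ), (0 : ℝ)) + v • ((0 : ℝ), (1 : ℝ)) := by
    simp [Prod.ext_iff]
  rw [h, map_add, map_smul, map_smul]

lemma slice1 {G : ℝ × ℝ → α} {G' : (ℝ × ℝ) →L[ℝ] α} {q : ℝ × ℝ}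
    (h : HasFDerivAt G G' q) :
    HasDerivAt (fun s => G (s, q.2)) (G' (1, 0)) q.1 := by
  have hγ : HasDerivAt (fun s : ℝ => ((s, q.2) : ℝ × ℝ)) (1, 0) q.1 :=
    (hasDerivAt_id q.1).prodMk (hasDerivAt_const q.1 q.2)
  exact h.comp_hasDerivAt q.1 hγ

lemma slice2 {G : ℝ × ℝ → α} {G' : (ℝ × ℝ) →L[ℝ] α} {q : ℝ × ℝ}
    (h : HasFDerivAt G G' q) :
    HasDerivAt (fun s => G (q.1, s)) (G' (0, 1)) q.2 := by
  have hγ : HasDerivAt (fun s : ℝ => ((q.1, s) : ℝ × ℝ)) (0, 1) q.2 :=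
    (hasDerivAt_const q.2 q.1).prodMk (hasDerivAt_id q.2)
  exact h.comp_hasDerivAt q.2 hγ

lemma lineDeriv' {G : ℝ × ℝ → α} {G' : (ℝ × ℝ) →L[ℝ] α} {p : ℝ × ℝ} {u v t : ℝ}
    (h : HasFDerivAt G G' (p.1 + t * u, p.2 + t * v)) :
    HasDerivAt (fun t' => G (p.1 + t' * u, p.2 + t' * v)) (G' (u, v)) t := by
  have h1 : HasDerivAt (fun t' : ℝ => p.1 + t' * u) u t := by
    simpa using ((hasDerivAt_id t).mul_const u).const_add p.1
  have h2 : HasDerivAt (fun t' : ℝ => p.2 + t' * v) v t := by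
    simpa using ((hasDerivAt_id t).mul_const v).const_add p.2
  exact h.comp_hasDerivAt t (h1.prodMk h2)

lemma clm_app {G : ℝ × ℝ → ((ℝ × ℝ) →L[ℝ] α)} {G' : (ℝ × ℝ) →L[ℝ] ((ℝ × ℝ) →L[ℝ] α)}
    {q : ℝ × ℝ} (h : HasFDerivAt G G' q) (w : ℝ × ℝ) :
    HasFDerivAt (fun y => G y w) (G'.flip w) q := by
  have h2 := h.clm_apply (hasFDerivAt_const w q)
  rw [ContinuousLinearMap.comp_zero, zero_add] at h2
  exact h2

end helpers

lemma ode_zero {h L : ℝ → ℝ} {K b : ℝ}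
    (hd : ∀ t ∈ Icc (-b) b, HasDerivAt h (L t) t)
    (hL : ∀ t ∈ Icc (-b) b, |L t| ≤ K * |h t|)
    (h0 : h 0 = 0) : ∀ t ∈ Icc (-b) b, h t = 0 := by
  rcases le_or_gt b 0 with hb | hb
  · intro t ht
    have h1 : t = 0 := le_antisymm (ht.2.trans hb) (by linarith [ht.1])
    rw [h1, h0]
  have forward : ∀ {h' L' : ℝ → ℝ}, (∀ t ∈ Icc (0:ℝ) b, HasDerivAt h' (L' t) t) →
      (∀ t ∈ Icc (0:ℝ) b, |L' t| ≤ K * |h' t|) → h' 0 = 0 → ∀ t ∈ Icc (0:ℝ) b, h' t = 0 := by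
    intro h' L' hd' hL' h0' t ht
    have hcont : ContinuousOn h' (Icc 0 b) := fun s hs => (hd' s hs).continuousAt.continuousWithinAt
    have key := norm_le_gronwallBound_of_norm_deriv_right_le (f := h') (f' := L')
      (δ := 0) (K := K) (ε := 0) (a := 0) (b := b) hcont
      (fun s hs => (hd' s (Ico_subset_Icc_self hs)).hasDerivWithinAt)
      (by simp [h0']) (fun s hs => by
        simpa [Real.norm_eq_abs] using hL' s (Ico_subset_Icc_self hs))
    have := key t ht
    rw [gronwallBound_ε0_δ0] at this
    have h4 : |h' t| ≤ 0 := by simpa [Real.norm_eq_abs] using this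
    exact abs_eq_zero.mp (le_antisymm h4 (abs_nonneg _))
  have hsub : ∀ t ∈ Icc (0:ℝ) b, t ∈ Icc (-b) b := fun t ht => ⟨by linarith [ht.1], ht.2⟩
  have hsub' : ∀ t ∈ Icc (0:ℝ) b, -t ∈ Icc (-b) b := fun t ht => ⟨by linarith [ht.2], by linarith [ht.1]⟩
  intro t ht
  rcases le_or_gt 0 t with h0t | h0t
  · exact forward (fun s hs => hd s (hsub s hs)) (fun s hs => hL s (hsub s hs)) h0 t ⟨h0t, ht.2⟩
  · have hneg : ∀ s ∈ Icc (0:ℝ) b, HasDerivAt (fun r => h (-r)) (-(L (-s))) s := by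
      intro s hs
      have := HasDerivAt.comp s (hd (-s) (hsub' s hs)) (hasDerivAt_neg s)
      exact this.congr_deriv (by ring)
    have hbnd : ∀ s ∈ Icc (0:ℝ) b, |(-(L (-s)))| ≤ K * |h (-s)| := by
      intro s hs
      simpa using hL (-s) (hsub' s hs)
    have := forward hneg hbnd (by simpa using h0) (-t) ⟨by linarith, by linarith [ht.1]⟩
    simpa using this

noncomputable def Fn (f : ℝ → ℝ → ℝ) : ℝ × ℝ → ℝ := fun q => f q.1 q.2
noncomputable def D1 (f : ℝ → ℝ → ℝ) : ℝ × ℝ → (ℝ × ℝ) →L[ℝ] ℝ := fderiv ℝ (Fn f)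
noncomputable def D2 (f : ℝ → ℝ → ℝ) : ℝ × ℝ → (ℝ × ℝ) →L[ℝ] ((ℝ × ℝ) →L[ℝ] ℝ) :=
  fderiv ℝ (D1 f)
noncomputable def D3 (f : ℝ → ℝ → ℝ) := fderiv ℝ (D2 f)
noncomputable instance instNACG2 : NormedAddCommGroup ((ℝ × ℝ) →L[ℝ] ((ℝ × ℝ) →L[ℝ] ℝ)) := inferInstance
noncomputable instance instNS2 : NormedSpace ℝ ((ℝ × ℝ) →L[ℝ] ((ℝ × ℝ) →L[ℝ] ℝ)) := inferInstance

variable {f : ℝ → ℝ → ℝ} {S : Set (ℝ × ℝ)} {q : ℝ × ℝ}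

lemma hasF1 (hS : IsOpen S) (hF : ContDiffOn ℝ 3 (Fn f) S) (hq : q ∈ S) :
    HasFDerivAt (Fn f) (D1 f q) q :=
  ((hF.contDiffAt (hS.mem_nhds hq)).differentiableAt (by norm_num)).hasFDerivAt

lemma contD1 (hS : IsOpen S) (hF : ContDiffOn ℝ 3 (Fn f) S) : ContDiffOn ℝ 2 (D1 f) S :=
  hF.fderiv_of_isOpen hS (by norm_num)

lemma contD2 (hS : IsOpen S) (hF : ContDiffOn ℝ 3 (Fn f) S) : ContDiffOn ℝ 1 (D2 f) S :=
  (contD1 hS hF).fderiv_of_isOpen hS (by norm_num)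

lemma contD3 (hS : IsOpen S) (hF : ContDiffOn ℝ 3 (Fn f) S) : ContinuousOn (D3 f) S :=
  (contD2 hS hF).continuousOn_fderiv_of_isOpen hS le_rfl

lemma hasF2 (hS : IsOpen S) (hF : ContDiffOn ℝ 3 (Fn f) S) (hq : q ∈ S) :
    HasFDerivAt (D1 f) (D2 f q) q :=
  (((contD1 hS hF).contDiffAt (hS.mem_nhds hq)).differentiableAt (by norm_num)).hasFDerivAt

lemma hasF3 (hS : IsOpen S) (hF : ContDiffOn ℝ 3 (Fn f) S) (hq : q ∈ S) :
    HasFDerivAt (D2 f) (D3 f q) q :=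
  (((contD2 hS hF).contDiffAt (hS.mem_nhds hq)).differentiableAt (by norm_num)).hasFDerivAt

lemma symD2 (hS : IsOpen S) (hF : ContDiffOn ℝ 3 (Fn f) S) (hq : q ∈ S) (w z : ℝ × ℝ) :
    D2 f q w z = D2 f q z w :=
  ((hF.contDiffAt (hS.mem_nhds hq)).isSymmSndFDerivAt (by norm_num)).eq w z

lemma symD3 (hS : IsOpen S) (hF : ContDiffOn ℝ 3 (Fn f) S) (hq : q ∈ S) (w z : ℝ × ℝ) :
    D3 f q w z = D3 f q z w :=
  (((contD1 hS hF).contDiffAt (hS.mem_nhds hq)).isSymmSndFDerivAt (by norm_num)).eq w z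

lemma pdx_eq (hS : IsOpen S) (hF : ContDiffOn ℝ 3 (Fn f) S) (hq : q ∈ S) :
    pdx f q.1 q.2 = D1 f q (1, 0) :=
  (slice1 (hasF1 hS hF hq)).deriv

lemma pdy_eq (hS : IsOpen S) (hF : ContDiffOn ℝ 3 (Fn f) S) (hq : q ∈ S) :
    pdy f q.1 q.2 = D1 f q (0, 1) :=
  (slice2 (hasF1 hS hF hq)).deriv

lemma mem_slice1 (hS : IsOpen S) (hq : q ∈ S) : {x : ℝ | (x, q.2) ∈ S} ∈ nhds q.1 :=
  (continuous_id.prodMk continuous_const).continuousAt.preimage_mem_nhds (hS.mem_nhds hq)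

lemma mem_slice2 (hS : IsOpen S) (hq : q ∈ S) : {y : ℝ | (q.1, y) ∈ S} ∈ nhds q.2 :=
  (continuous_const.prodMk continuous_id).continuousAt.preimage_mem_nhds (hS.mem_nhds hq)

lemma pdxx_eq (hS : IsOpen S) (hF : ContDiffOn ℝ 3 (Fn f) S) (hq : q ∈ S) :
    pdx (pdx f) q.1 q.2 = D2 f q (1, 0) (1, 0) := by
  have hEv : (fun x => pdx f x q.2) =ᶠ[nhds q.1] fun x => D1 f (x, q.2) (1, 0) := by
    filter_upwards [mem_slice1 hS hq] with x hx
    exact pdx_eq hS hF (q := (x, q.2)) hx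
  have hD : HasDerivAt (fun x => D1 f (x, q.2) (1, 0)) (D2 f q (1, 0) (1, 0)) q.1 := by
    simpa using slice1 (clm_app (hasF2 hS hF hq) (1, 0))
  show deriv (fun x => pdx f x q.2) q.1 = _
  rw [hEv.deriv_eq, hD.deriv]

lemma pdxy_eq (hS : IsOpen S) (hF : ContDiffOn ℝ 3 (Fn f) S) (hq : q ∈ S) :
    pdy (pdx f) q.1 q.2 = D2 f q (0, 1) (1, 0) := by
  have hEv : (fun y => pdx f q.1 y) =ᶠ[nhds q.2] fun y => D1 f (q.1, y) (1, 0) := by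
    filter_upwards [mem_slice2 hS hq] with y hy
    exact pdx_eq hS hF (q := (q.1, y)) hy
  have hD : HasDerivAt (fun y => D1 f (q.1, y) (1, 0)) (D2 f q (0, 1) (1, 0)) q.2 := by
    simpa using slice2 (clm_app (hasF2 hS hF hq) (1, 0))
  show deriv (fun y => pdx f q.1 y) q.2 = _
  rw [hEv.deriv_eq, hD.deriv]

lemma pdyy_eq (hS : IsOpen S) (hF : ContDiffOn ℝ 3 (Fn f) S) (hq : q ∈ S) :
    pdy (pdy f) q.1 q.2 = D2 f q (0, 1) (0, 1) := by
  have hEv : (fun y => pdy f q.1 y) =ᶠ[nhds q.2] fun y => D1 f (q.1, y) (0, 1) := by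
    filter_upwards [mem_slice2 hS hq] with y hy
    exact pdy_eq hS hF (q := (q.1, y)) hy
  have hD : HasDerivAt (fun y => D1 f (q.1, y) (0, 1)) (D2 f q (0, 1) (0, 1)) q.2 := by
    simpa using slice2 (clm_app (hasF2 hS hF hq) (0, 1))
  show deriv (fun y => pdy f q.1 y) q.2 = _
  rw [hEv.deriv_eq, hD.deriv]

lemma symD3' (hS : IsOpen S) (hF : ContDiffOn ℝ 3 (Fn f) S) (hq : q ∈ S) (w : ℝ × ℝ) :
    D3 f q w (1, 0) (0, 1) = D3 f q w (0, 1) (1, 0) := by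
  have hEv : (fun y => D2 f y (1, 0) (0, 1)) =ᶠ[nhds q] (fun y => D2 f y (0, 1) (1, 0)) := by
    filter_upwards [hS.mem_nhds hq] with y hy
    exact symD2 hS hF hy (1, 0) (0, 1)
  have h1 : HasFDerivAt (fun y => D2 f y (1, 0) (0, 1)) (((D3 f q).flip (1, 0)).flip (0, 1)) q :=
    clm_app (clm_app (hasF3 hS hF hq) (1, 0)) (0, 1)
  have h2 : HasFDerivAt (fun y => D2 f y (0, 1) (1, 0)) (((D3 f q).flip (0, 1)).flip (1, 0)) q :=
    clm_app (clm_app (hasF3 hS hF hq) (0, 1)) (1, 0)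
  have h3 : (((D3 f q).flip ((1:ℝ), (0:ℝ))).flip ((0:ℝ), (1:ℝ)))
      = (((D3 f q).flip ((0:ℝ), (1:ℝ))).flip ((1:ℝ), (0:ℝ))) := by
    rw [← h1.fderiv, ← h2.fderiv]
    exact hEv.fderiv_eq
  have h4 := DFunLike.congr_fun h3 w
  simpa using h4

lemma lineD2 (hS : IsOpen S) (hF : ContDiffOn ℝ 3 (Fn f) S) {p : ℝ × ℝ} {u v t : ℝ}
    (hq : ((p.1 + t * u, p.2 + t * v) : ℝ × ℝ) ∈ S) (w z : ℝ × ℝ) :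
    HasDerivAt (fun t' => D2 f (p.1 + t' * u, p.2 + t' * v) w z)
      (u * D3 f (p.1 + t * u, p.2 + t * v) (1, 0) w z
        + v * D3 f (p.1 + t * u, p.2 + t * v) (0, 1) w z) t := by
  have h1 := clm_app (clm_app (hasF3 hS hF hq) w) z
  have h2 := lineDeriv' (p := p) (u := u) (v := v) (t := t) h1
  refine h2.congr_deriv ?_
  rw [ContinuousLinearMap.flip_apply, ContinuousLinearMap.flip_apply,
    lin2 (D3 f (p.1 + t * u, p.2 + t * v)) u v]
  simp

lemma lineD1 (hS : IsOpen S) (hF : ContDiffOn ℝ 3 (Fn f) S) {p : ℝ × ℝ} {u v t : ℝ}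
    (hq : ((p.1 + t * u, p.2 + t * v) : ℝ × ℝ) ∈ S) (w : ℝ × ℝ) :
    HasDerivAt (fun t' => D1 f (p.1 + t' * u, p.2 + t' * v) w)
      (u * D2 f (p.1 + t * u, p.2 + t * v) (1, 0) w
        + v * D2 f (p.1 + t * u, p.2 + t * v) (0, 1) w) t := by
  have h1 := clm_app (hasF2 hS hF hq) w
  have h2 := lineDeriv' (p := p) (u := u) (v := v) (t := t) h1
  refine h2.congr_deriv ?_
  rw [ContinuousLinearMap.flip_apply, lin2 (D2 f (p.1 + t * u, p.2 + t * v)) u v]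
  simp

lemma lineD0 (hS : IsOpen S) (hF : ContDiffOn ℝ 3 (Fn f) S) {p : ℝ × ℝ} {u v t : ℝ}
    (hq : ((p.1 + t * u, p.2 + t * v) : ℝ × ℝ) ∈ S) :
    HasDerivAt (fun t' => Fn f (p.1 + t' * u, p.2 + t' * v))
      (u * D1 f (p.1 + t * u, p.2 + t * v) (1, 0)
        + v * D1 f (p.1 + t * u, p.2 + t * v) (0, 1)) t := by
  have h2 := lineDeriv' (p := p) (u := u) (v := v) (t := t) (hasF1 hS hF hq)
  refine h2.congr_deriv ?_
  rw [lin2 (D1 f (p.1 + t * u, p.2 + t * v)) u v]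
  simp

lemma sliceD2x (hS : IsOpen S) (hF : ContDiffOn ℝ 3 (Fn f) S) (hq : q ∈ S) (w z : ℝ × ℝ) :
    HasDerivAt (fun x => D2 f (x, q.2) w z) (D3 f q (1, 0) w z) q.1 := by
  simpa using slice1 (clm_app (clm_app (hasF3 hS hF hq) w) z)

lemma det_deriv_x (hS : IsOpen S) (hF : ContDiffOn ℝ 3 (Fn f) S)
    (hdet : ∀ q' ∈ S, D2 f q' (1, 0) (1, 0) * D2 f q' (0, 1) (0, 1)
      - (D2 f q' (0, 1) (1, 0)) ^ 2 = 0) (hq : q ∈ S) :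
    D3 f q (1, 0) (1, 0) (1, 0) * D2 f q (0, 1) (0, 1)
      + D2 f q (1, 0) (1, 0) * D3 f q (1, 0) (0, 1) (0, 1)
      - 2 * D2 f q (0, 1) (1, 0) * D3 f q (1, 0) (0, 1) (1, 0) = 0 := by
  have hax := sliceD2x hS hF hq (1, 0) (1, 0)
  have hbx := sliceD2x hS hF hq (0, 1) (1, 0)
  have hcx := sliceD2x hS hF hq (0, 1) (0, 1)
  have hcomb : HasDerivAt
      (fun x => D2 f (x, q.2) (1, 0) (1, 0) * D2 f (x, q.2) (0, 1) (0, 1)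
        - (D2 f (x, q.2) (0, 1) (1, 0)) ^ 2)
      (D3 f q (1, 0) (1, 0) (1, 0) * D2 f q (0, 1) (0, 1)
        + D2 f q (1, 0) (1, 0) * D3 f q (1, 0) (0, 1) (0, 1)
        - 2 * D2 f q (0, 1) (1, 0) * D3 f q (1, 0) (0, 1) (1, 0)) q.1 := by
    have h := (hax.mul hcx).sub (hbx.pow 2)
    refine h.congr_deriv ?_
    simp only [Prod.mk.eta, pow_one, Nat.cast_ofNat]
    ring
  have hEv : (fun x => D2 f (x, q.2) (1, 0) (1, 0) * D2 f (x, q.2) (0, 1) (0, 1)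
      - (D2 f (x, q.2) (0, 1) (1, 0)) ^ 2) =ᶠ[nhds q.1] fun _ => (0 : ℝ) := by
    filter_upwards [mem_slice1 hS hq] with x hx
    exact hdet (x, q.2) hx
  have h0 := hcomb.congr_of_eventuallyEq hEv.symm
  exact h0.unique (hasDerivAt_const q.1 0)

set_option maxHeartbeats 2000000

/-- if `f_xx f_yy - f_xy² = 0` on an open disk and `f_xx, f_yy` do not vanish
at `p`, then along the direction `(u,v) = (f_yy(p), -f_xy(p))` the tangent plane of the
graph of `f` is constant on a small segment through `p`, and the graph contains that
segment. -/
theorem stmt_2 (f : ℝ → ℝ → ℝ) (c : ℝ × ℝ) (ρ : ℝ)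
    (hf : ContDiffOn ℝ 3 (fun q : ℝ × ℝ => f q.1 q.2) (Metric.ball c ρ))
    (hK : ∀ q ∈ Metric.ball c ρ,
      pdx (pdx f) q.1 q.2 * pdy (pdy f) q.1 q.2 - (pdy (pdx f) q.1 q.2) ^ 2 = 0)
    (p : ℝ × ℝ) (hp : p ∈ Metric.ball c ρ)
    (hxx : pdx (pdx f) p.1 p.2 ≠ 0) (hyy : pdy (pdy f) p.1 p.2 ≠ 0) :
    ∃ ε > 0, ∃ u v : ℝ, u = pdy (pdy f) p.1 p.2 ∧ v = -(pdy (pdx f) p.1 p.2) ∧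
      (u, v) ≠ ((0 : ℝ), (0 : ℝ)) ∧
      ∀ t ∈ Ioo (-ε) ε,
        (p.1 + t * u, p.2 + t * v) ∈ Metric.ball c ρ ∧
        pdx f (p.1 + t * u) (p.2 + t * v) = pdx f p.1 p.2 ∧
        pdy f (p.1 + t * u) (p.2 + t * v) = pdy f p.1 p.2 ∧
        f (p.1 + t * u) (p.2 + t * v)
          = f p.1 p.2 + t * (pdx f p.1 p.2 * u + pdy f p.1 p.2 * v) := by
  have hS : IsOpen (Metric.ball c ρ) := Metric.isOpen_ball
  have hF : ContDiffOn ℝ 3 (Fn f) (Metric.ball c ρ) := hf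
  -- determinant relation in D2 form
  have hdet : ∀ q ∈ Metric.ball c ρ,
      D2 f q (1, 0) (1, 0) * D2 f q (0, 1) (0, 1) - (D2 f q (0, 1) (1, 0)) ^ 2 = 0 := by
    intro q hq
    have h := hK q hq
    rwa [pdxx_eq hS hF hq, pdyy_eq hS hF hq, pdxy_eq hS hF hq] at h
  have hu2 : pdy (pdy f) p.1 p.2 = D2 f p (0, 1) (0, 1) := pdyy_eq hS hF hp
  have hv2 : pdy (pdx f) p.1 p.2 = D2 f p (0, 1) (1, 0) := pdxy_eq hS hF hp
  have hA0 : D2 f p (1, 0) (1, 0) ≠ 0 := by rw [← pdxx_eq hS hF hp]; exact hxx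
  set u : ℝ := pdy (pdy f) p.1 p.2 with hu_def
  set v : ℝ := -(pdy (pdx f) p.1 p.2) with hv_def
  have hv3 : v = -(D2 f p (0, 1) (1, 0)) := by rw [hv_def, hv2]
  -- radius on which D2 f · (1,0) (1,0) does not vanish
  have haacont : ContinuousOn (fun q' => D2 f q' (1, 0) (1, 0)) (Metric.ball c ρ) :=
    ((contD2 hS hF).continuousOn.clm_apply continuousOn_const).clm_apply continuousOn_const
  have haaat : ContinuousAt (fun q' => D2 f q' (1, 0) (1, 0)) p :=
    haacont.continuousAt (hS.mem_nhds hp)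
  have hev : ∀ᶠ q' in nhds p, q' ∈ Metric.ball c ρ ∧ D2 f q' (1, 0) (1, 0) ≠ 0 := by
    have h1 : ∀ᶠ q' in nhds p, q' ∈ Metric.ball c ρ := hS.mem_nhds hp
    exact h1.and (haaat.eventually_ne hA0)
  obtain ⟨r, hr0, hrball⟩ := Metric.eventually_nhds_iff_ball.mp hev
  set ε : ℝ := r / (|u| + |v| + 1) with hε_def
  have hden : (0 : ℝ) < |u| + |v| + 1 := by positivity
  have hεpos : 0 < ε := div_pos hr0 hden
  set b : ℝ := ε / 2 with hb_def
  have hbpos : 0 < b := by positivity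
  have h0mem : (0 : ℝ) ∈ Icc (-b) b := ⟨by linarith, by linarith⟩
  -- membership of the segment
  have hmem : ∀ t ∈ Icc (-b) b, ((p.1 + t * u, p.2 + t * v) : ℝ × ℝ) ∈ Metric.ball p r := by
    intro t ht
    have habs : |t| ≤ b := abs_le.mpr ⟨ht.1, ht.2⟩
    have h1 : dist ((p.1 + t * u, p.2 + t * v) : ℝ × ℝ) p ≤ |t| * (|u| + |v| + 1) := by
      rw [Prod.dist_eq]
      apply max_le
      · rw [Real.dist_eq]
        have he : p.1 + t * u - p.1 = t * u := by ring
        rw [he, abs_mul]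
        nlinarith [abs_nonneg t, abs_nonneg u, abs_nonneg v]
      · rw [Real.dist_eq]
        have he : p.2 + t * v - p.2 = t * v := by ring
        rw [he, abs_mul]
        nlinarith [abs_nonneg t, abs_nonneg u, abs_nonneg v]
    have h2 : |t| * (|u| + |v| + 1) < r := by
      have hlt : b < ε := by rw [hb_def]; linarith
      calc |t| * (|u| + |v| + 1) ≤ b * (|u| + |v| + 1) :=
            mul_le_mul_of_nonneg_right habs (le_of_lt hden)
        _ < ε * (|u| + |v| + 1) := by exact mul_lt_mul_of_pos_right hlt hden
        _ = r := by rw [hε_def]; field_simp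
    exact Metric.mem_ball.mpr (lt_of_le_of_lt h1 h2)
  have hQS : ∀ t ∈ Icc (-b) b, ((p.1 + t * u, p.2 + t * v) : ℝ × ℝ) ∈ Metric.ball c ρ :=
    fun t ht => (hrball _ (hmem t ht)).1
  have hQA : ∀ t ∈ Icc (-b) b, D2 f (p.1 + t * u, p.2 + t * v) (1, 0) (1, 0) ≠ 0 :=
    fun t ht => (hrball _ (hmem t ht)).2
  have hγ0 : ((p.1 + 0 * u, p.2 + 0 * v) : ℝ × ℝ) = p := by simp
    -- coefficient function Λ for the linear ODE satisfied by h₁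
  set Λ : ℝ → ℝ := fun t =>
    (D3 f (p.1 + t * u, p.2 + t * v) (1, 0) (1, 0) (1, 0)
        * (u * D2 f (p.1 + t * u, p.2 + t * v) (1, 0) (1, 0)
          - v * D2 f (p.1 + t * u, p.2 + t * v) (0, 1) (1, 0))
      + 2 * D2 f (p.1 + t * u, p.2 + t * v) (1, 0) (1, 0)
        * D3 f (p.1 + t * u, p.2 + t * v) (1, 0) (0, 1) (1, 0) * v)
      / (D2 f (p.1 + t * u, p.2 + t * v) (1, 0) (1, 0)) ^ 2 with hΛ_def
  -- h₁ satisfies the ODE h₁' = Λ h₁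
  have hder : ∀ t ∈ Icc (-b) b, HasDerivAt
      (fun t' => u * D2 f (p.1 + t' * u, p.2 + t' * v) (1, 0) (1, 0)
        + v * D2 f (p.1 + t' * u, p.2 + t' * v) (0, 1) (1, 0))
      (Λ t * (u * D2 f (p.1 + t * u, p.2 + t * v) (1, 0) (1, 0)
        + v * D2 f (p.1 + t * u, p.2 + t * v) (0, 1) (1, 0))) t := by
    intro t ht
    have hq := hQS t ht
    have hDA := lineD2 hS hF hq (1, 0) (1, 0)
    have hDB := lineD2 hS hF hq (0, 1) (1, 0)
    have hd := (HasDerivAt.const_mul u hDA).add (HasDerivAt.const_mul v hDB)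
    have s1 : D3 f (p.1 + t * u, p.2 + t * v) (0, 1) (1, 0) (1, 0)
        = D3 f (p.1 + t * u, p.2 + t * v) (1, 0) (0, 1) (1, 0) :=
      DFunLike.congr_fun (symD3 hS hF hq (0, 1) (1, 0)) (1, 0)
    have s2a : D3 f (p.1 + t * u, p.2 + t * v) (0, 1) (0, 1) (1, 0)
        = D3 f (p.1 + t * u, p.2 + t * v) (0, 1) (1, 0) (0, 1) :=
      (symD3' hS hF hq (0, 1)).symm
    have s2b : D3 f (p.1 + t * u, p.2 + t * v) (0, 1) (1, 0) (0, 1)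
        = D3 f (p.1 + t * u, p.2 + t * v) (1, 0) (0, 1) (0, 1) :=
      DFunLike.congr_fun (symD3 hS hF hq (0, 1) (1, 0)) (0, 1)
    rw [s1, s2a, s2b] at hd
    have hc1 := hdet _ hq
    have hc2 := det_deriv_x hS hF hdet hq
    have hA := hQA t ht
    have hval : u * (u * D3 f (p.1 + t * u, p.2 + t * v) (1, 0) (1, 0) (1, 0)
          + v * D3 f (p.1 + t * u, p.2 + t * v) (1, 0) (0, 1) (1, 0))
        + v * (u * D3 f (p.1 + t * u, p.2 + t * v) (1, 0) (0, 1) (1, 0)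
          + v * D3 f (p.1 + t * u, p.2 + t * v) (1, 0) (0, 1) (0, 1))
        = Λ t * (u * D2 f (p.1 + t * u, p.2 + t * v) (1, 0) (1, 0)
          + v * D2 f (p.1 + t * u, p.2 + t * v) (0, 1) (1, 0)) := by
      rw [hΛ_def]
      rw [div_mul_eq_mul_div, eq_div_iff (pow_ne_zero 2 hA)]
      linear_combination (v ^ 2 * D2 f (p.1 + t * u, p.2 + t * v) (1, 0) (1, 0)) * hc2
        - (v ^ 2 * D3 f (p.1 + t * u, p.2 + t * v) (1, 0) (1, 0) (1, 0)) * hc1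
    rwa [hval] at hd
  -- continuity of Λ on the compact interval, giving a Gronwall constant
  have hγc : Continuous (fun t : ℝ => ((p.1 + t * u, p.2 + t * v) : ℝ × ℝ)) :=
    (continuous_const.add (continuous_id.mul continuous_const)).prodMk
      (continuous_const.add (continuous_id.mul continuous_const))
  have hmapsTo : MapsTo (fun t : ℝ => ((p.1 + t * u, p.2 + t * v) : ℝ × ℝ))
      (Icc (-b) b) (Metric.ball c ρ) := fun t ht => hQS t ht
  have hD2c : ContinuousOn (fun t => D2 f (p.1 + t * u, p.2 + t * v)) (Icc (-b) b) :=
    (contD2 hS hF).continuousOn.comp hγc.continuousOn hmapsTo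
  have hD3c : ContinuousOn (fun t => D3 f (p.1 + t * u, p.2 + t * v)) (Icc (-b) b) :=
    (contD3 hS hF).comp hγc.continuousOn hmapsTo
  have hAc : ContinuousOn (fun t => D2 f (p.1 + t * u, p.2 + t * v) (1, 0) (1, 0)) (Icc (-b) b) :=
    (hD2c.clm_apply continuousOn_const).clm_apply continuousOn_const
  have hBc : ContinuousOn (fun t => D2 f (p.1 + t * u, p.2 + t * v) (0, 1) (1, 0)) (Icc (-b) b) :=
    (hD2c.clm_apply continuousOn_const).clm_apply continuousOn_const
  have hP1c : ContinuousOn (fun t => D3 f (p.1 + t * u, p.2 + t * v) (1, 0) (1, 0) (1, 0))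
      (Icc (-b) b) :=
    ((hD3c.clm_apply continuousOn_const).clm_apply continuousOn_const).clm_apply
      continuousOn_const
  have hP2c : ContinuousOn (fun t => D3 f (p.1 + t * u, p.2 + t * v) (1, 0) (0, 1) (1, 0))
      (Icc (-b) b) :=
    ((hD3c.clm_apply continuousOn_const).clm_apply continuousOn_const).clm_apply
      continuousOn_const
  have hΛc : ContinuousOn Λ (Icc (-b) b) := by
    rw [hΛ_def]
    exact ((hP1c.mul ((continuousOn_const.mul hAc).sub (continuousOn_const.mul hBc))).add
      (((continuousOn_const.mul hAc).mul hP2c).mul continuousOn_const)).div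
      (hAc.pow 2) (fun t ht => pow_ne_zero _ (hQA t ht))
  obtain ⟨K, hKb⟩ := isCompact_Icc.exists_bound_of_continuousOn hΛc
  -- h₁ ≡ 0 on the interval
  have h1zero : ∀ t ∈ Icc (-b) b,
      u * D2 f (p.1 + t * u, p.2 + t * v) (1, 0) (1, 0)
        + v * D2 f (p.1 + t * u, p.2 + t * v) (0, 1) (1, 0) = 0 := by
    have h0' : u * D2 f (p.1 + 0 * u, p.2 + 0 * v) (1, 0) (1, 0)
        + v * D2 f (p.1 + 0 * u, p.2 + 0 * v) (0, 1) (1, 0) = 0 := by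
      rw [hγ0, hu2, hv3]
      linear_combination hdet p hp
    have hLbd : ∀ t ∈ Icc (-b) b,
        |Λ t * (u * D2 f (p.1 + t * u, p.2 + t * v) (1, 0) (1, 0)
          + v * D2 f (p.1 + t * u, p.2 + t * v) (0, 1) (1, 0))|
        ≤ K * |u * D2 f (p.1 + t * u, p.2 + t * v) (1, 0) (1, 0)
          + v * D2 f (p.1 + t * u, p.2 + t * v) (0, 1) (1, 0)| := by
      intro t ht
      rw [abs_mul]
      exact mul_le_mul_of_nonneg_right (by simpa using hKb t ht) (abs_nonneg _)
    exact ode_zero hder hLbd h0'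
  -- h₂ ≡ 0 as well
  have h2zero : ∀ t ∈ Icc (-b) b,
      u * D2 f (p.1 + t * u, p.2 + t * v) (0, 1) (1, 0)
        + v * D2 f (p.1 + t * u, p.2 + t * v) (0, 1) (0, 1) = 0 := by
    intro t ht
    have hq := hQS t ht
    have hc1 := hdet _ hq
    have h1 := h1zero t ht
    have hA := hQA t ht
    have key : D2 f (p.1 + t * u, p.2 + t * v) (1, 0) (1, 0)
        * (u * D2 f (p.1 + t * u, p.2 + t * v) (0, 1) (1, 0)
          + v * D2 f (p.1 + t * u, p.2 + t * v) (0, 1) (0, 1))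
        = D2 f (p.1 + t * u, p.2 + t * v) (0, 1) (1, 0)
          * (u * D2 f (p.1 + t * u, p.2 + t * v) (1, 0) (1, 0)
            + v * D2 f (p.1 + t * u, p.2 + t * v) (0, 1) (1, 0))
          + v * (D2 f (p.1 + t * u, p.2 + t * v) (1, 0) (1, 0)
            * D2 f (p.1 + t * u, p.2 + t * v) (0, 1) (0, 1)
            - (D2 f (p.1 + t * u, p.2 + t * v) (0, 1) (1, 0)) ^ 2) := by ring
    rw [h1, hc1] at key
    simp only [mul_zero, add_zero, zero_add] at key
    exact (mul_eq_zero.mp key).resolve_left hA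
  -- a function with zero derivative on the interval is constant
  have const_of : ∀ g : ℝ → ℝ, (∀ x ∈ Icc (-b) b, HasDerivAt g 0 x) →
      ∀ t ∈ Icc (-b) b, g t = g 0 := by
    intro g hg t ht
    have hb2 := Convex.norm_image_sub_le_of_norm_hasDerivWithin_le (f := g) (f' := fun _ => (0 : ℝ))
      (C := 0) (fun x hx => (hg x hx).hasDerivWithinAt) (fun x hx => by simp)
      (convex_Icc _ _) h0mem ht
    have h2 : ‖g t - g 0‖ ≤ 0 := by simpa using hb2
    exact sub_eq_zero.mp (norm_eq_zero.mp (le_antisymm h2 (norm_nonneg _)))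
  -- the first partial derivative is constant along the segment
  have hφconst : ∀ t ∈ Icc (-b) b,
      D1 f (p.1 + t * u, p.2 + t * v) (1, 0) = D1 f p (1, 0) := by
    intro t ht
    have hc := const_of (fun t' => D1 f (p.1 + t' * u, p.2 + t' * v) (1, 0))
      (fun x hx => by
        have hd := lineD1 hS hF (hQS x hx) (1, 0)
        rwa [h1zero x hx] at hd) t ht
    simpa only [hγ0] using hc
  -- the second partial derivative is constant along the segment
  have hψconst : ∀ t ∈ Icc (-b) b,
      D1 f (p.1 + t * u, p.2 + t * v) (0, 1) = D1 f p (0, 1) := by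
    intro t ht
    have hc := const_of (fun t' => D1 f (p.1 + t' * u, p.2 + t' * v) (0, 1))
      (fun x hx => by
        have hd := lineD1 hS hF (hQS x hx) (0, 1)
        have hsym : D2 f (p.1 + x * u, p.2 + x * v) (1, 0) (0, 1)
            = D2 f (p.1 + x * u, p.2 + x * v) (0, 1) (1, 0) :=
          symD2 hS hF (hQS x hx) (1, 0) (0, 1)
        rw [hsym] at hd
        have hsym2 : D2 f (p.1 + x * u, p.2 + x * v) (0, 1) (0, 1)
            = D2 f (p.1 + x * u, p.2 + x * v) (0, 1) (0, 1) := rfl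
        rwa [h2zero x hx] at hd) t ht
    simpa only [hγ0] using hc
  -- the height function is affine along the segment
  have hpdxp : pdx f p.1 p.2 = D1 f p (1, 0) := pdx_eq hS hF hp
  have hpdyp : pdy f p.1 p.2 = D1 f p (0, 1) := pdy_eq hS hF hp
  set κ : ℝ := pdx f p.1 p.2 * u + pdy f p.1 p.2 * v with hκ_def
  have hΦconst : ∀ t ∈ Icc (-b) b,
      Fn f (p.1 + t * u, p.2 + t * v) = Fn f p + t * κ := by
    intro t ht
    have hc := const_of (fun t' => Fn f (p.1 + t' * u, p.2 + t' * v) - t' * κ)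
      (fun x hx => by
        have hd := (lineD0 hS hF (hQS x hx)).sub ((hasDerivAt_id x).mul_const κ)
        have hval : u * D1 f (p.1 + x * u, p.2 + x * v) (1, 0)
            + v * D1 f (p.1 + x * u, p.2 + x * v) (0, 1) - 1 * κ = 0 := by
          rw [hφconst x hx, hψconst x hx, hκ_def, hpdxp, hpdyp]; ring
        rwa [hval] at hd) t ht
    simp only [hγ0] at hc
    simp only [zero_mul, sub_zero] at hc
    linarith [hc]
  -- assemble the answer
  refine ⟨b, hbpos, u, v, rfl, rfl, fun hcon => hyy (congrArg Prod.fst hcon), ?_⟩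
  intro t ht
  have ht' : t ∈ Icc (-b) b := ⟨le_of_lt ht.1, le_of_lt ht.2⟩
  have hq := hQS t ht'
  refine ⟨hq, ?_, ?_, ?_⟩
  · have e1 : pdx f (p.1 + t * u) (p.2 + t * v) = D1 f (p.1 + t * u, p.2 + t * v) (1, 0) :=
      pdx_eq hS hF hq
    rw [e1, hφconst t ht', ← hpdxp]
  · have e2 : pdy f (p.1 + t * u) (p.2 + t * v) = D1 f (p.1 + t * u, p.2 + t * v) (0, 1) :=
      pdy_eq hS hF hq
    rw [e2, hψconst t ht', ← hpdyp]
  · exact hΦconst t ht'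
end

section
/- Let f be C^3 at a point. The system { f_xx u² + 2 f_xy u v + f_yy v² = 0, f_xxx u³ + 3 f_xxy u² v + 3 f_xyy u v² + f_yyy v³ = 0 } has a common nonzero real solution (u,v) if and only if f_xx f_yy - f_xy² ≤ 0 and the resultant expression f_yy³ f_xxx² + 6 f_yy f_xxx f_yyy f_xy f_xx - 6 f_yy² f_xxx f_xyy f_xx - 6 f_yyy f_xy f_xx² f_xyy + 9 f_yy f_xyy² f_xx² - 6 f_xy f_yy² f_xxy f_xxx + 12 f_xy² f_xxy f_yyy f_xx - 18 f_xy f_yy f_xxy f_xyy f_xx + 12 f_yy f_xyy f_xy² f_xxx - 8 f_yyy f_xy³ f_xxx + 9 f_xx f_yy² f_xxy² - 6 f_yy f_xxy f_yyy f_xx² + f_yyy² f_xx³ = 0 holds, provided not all second and third partial derivatives of f vanish simultaneously in a degenerate way (i.e. the two binary forms are not both identically zero). -/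
open Real

/-- the binary quadratic and cubic forms built from the second and third
order partial derivatives at a point have a common nonzero real root if and only if
the Gaussian-curvature discriminant is nonpositive and the resultant vanishes
(assuming the quadratic form is not identically zero). -/
theorem stmt_4 (fxx fxy fyy fxxx fxxy fxyy fyyy : ℝ)
    (hQ : ¬(fxx = 0 ∧ fxy = 0 ∧ fyy = 0)) :
    (∃ u v : ℝ, (u, v) ≠ ((0 : ℝ), (0 : ℝ)) ∧
        fxx * u ^ 2 + 2 * fxy * u * v + fyy * v ^ 2 = 0 ∧
        fxxx * u ^ 3 + 3 * fxxy * u ^ 2 * v + 3 * fxyy * u * v ^ 2 + fyyy * v ^ 3 = 0)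
    ↔ (fxx * fyy - fxy ^ 2 ≤ 0 ∧
        fyy ^ 3 * fxxx ^ 2 + 6 * fyy * fxxx * fyyy * fxy * fxx
          - 6 * fyy ^ 2 * fxxx * fxyy * fxx - 6 * fyyy * fxy * fxx ^ 2 * fxyy
          + 9 * fyy * fxyy ^ 2 * fxx ^ 2 - 6 * fxy * fyy ^ 2 * fxxy * fxxx
          + 12 * fxy ^ 2 * fxxy * fyyy * fxx - 18 * fxy * fyy * fxxy * fxyy * fxx
          + 12 * fyy * fxyy * fxy ^ 2 * fxxx - 8 * fyyy * fxy ^ 3 * fxxx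
          + 9 * fxx * fyy ^ 2 * fxxy ^ 2 - 6 * fyy * fxxy * fyyy * fxx ^ 2
          + fyyy ^ 2 * fxx ^ 3 = 0) := by
  constructor
  · rintro ⟨u, v, hne, hq, hc⟩
    have huv : ¬(u = 0 ∧ v = 0) := by
      intro ⟨h1, h2⟩; exact hne (by simp [h1, h2])
    constructor
    · -- discriminant nonpositive
      by_contra hd
      push_neg at hd
      have hfxx : fxx ≠ 0 := by
        intro h0
        rw [h0] at hd
        nlinarith [sq_nonneg fxy]
      have h1 : (fxx * u + fxy * v) ^ 2 + (fxx * fyy - fxy ^ 2) * v ^ 2 = 0 := by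
        linear_combination fxx * hq
      have hv : v = 0 := by
        have h2 : v ^ 2 ≤ 0 := by nlinarith [sq_nonneg (fxx * u + fxy * v)]
        have h2' : v ^ 2 = 0 := le_antisymm h2 (sq_nonneg v)
        exact pow_eq_zero_iff (by norm_num) |>.mp h2'
      have hu : u = 0 := by
        have h2 : (fxx * u) ^ 2 = 0 := by rw [hv] at h1; linear_combination h1
        have h3 : fxx * u = 0 := by
          have := sq_eq_zero_iff.mp h2; exact this
        exact (mul_eq_zero.mp h3).resolve_left hfxx
      exact huv ⟨hu, hv⟩
    · -- resultant vanishes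
      rcases eq_or_ne v 0 with hv | hv
      · subst hv
        have hu : u ≠ 0 := fun h => huv ⟨h, rfl⟩
        have h2 : fxx * u ^ 2 = 0 := by linear_combination hq
        have h3 : fxxx * u ^ 3 = 0 := by linear_combination hc
        have hfxx : fxx = 0 := by
          rcases mul_eq_zero.mp h2 with h | h
          · exact h
          · exact absurd (pow_eq_zero_iff (by norm_num)|>.mp h) hu
        have hfxxx : fxxx = 0 := by
          rcases mul_eq_zero.mp h3 with h | h
          · exact h
          · exact absurd (pow_eq_zero_iff (by norm_num)|>.mp h) hu
        rw [hfxx, hfxxx]; ring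
      · -- use the Bezout identity A·Q + B·C = R·v⁴
        have key : (fyy ^ 3 * fxxx ^ 2 + 6 * fyy * fxxx * fyyy * fxy * fxx
          - 6 * fyy ^ 2 * fxxx * fxyy * fxx - 6 * fyyy * fxy * fxx ^ 2 * fxyy
          + 9 * fyy * fxyy ^ 2 * fxx ^ 2 - 6 * fxy * fyy ^ 2 * fxxy * fxxx
          + 12 * fxy ^ 2 * fxxy * fyyy * fxx - 18 * fxy * fyy * fxxy * fxyy * fxx
          + 12 * fyy * fxyy * fxy ^ 2 * fxxx - 8 * fyyy * fxy ^ 3 * fxxx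
          + 9 * fxx * fyy ^ 2 * fxxy ^ 2 - 6 * fyy * fxxy * fyyy * fxx ^ 2
          + fyyy ^ 2 * fxx ^ 3) * v ^ 4 = 0 := by
          linear_combination
            ((4*fxy^2*fxxx^2 - fxx*fyy*fxxx^2 - 6*fxx*fxy*fxxx*fxxy + 3*fxx^2*fxxx*fxyy) * u^2
              + (-2*fxy*fyy*fxxx^2 + 12*fxy^2*fxxx*fxxy - 18*fxx*fxy*fxxy^2
                 + 9*fxx^2*fxxy*fxyy - fxx^2*fxxx*fyyy) * u * v
              + (fyy^2*fxxx^2 - 6*fxy*fyy*fxxx*fxxy + 12*fxy^2*fxxx*fxyy + 9*fxx*fyy*fxxy^2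
                 - 6*fxx*fyy*fxxx*fxyy - 18*fxx*fxy*fxxy*fxyy + 2*fxx*fxy*fxxx*fyyy
                 + 9*fxx^2*fxyy^2 - 3*fxx^2*fxxy*fyyy) * v^2) * hq
            + ((-4*fxx*fxy^2*fxxx + fxx^2*fyy*fxxx + 6*fxx^2*fxy*fxxy - 3*fxx^3*fxyy) * u
              + (-8*fxy^3*fxxx + 4*fxx*fxy*fyy*fxxx + 12*fxx*fxy^2*fxxy - 3*fxx^2*fyy*fxxy
                 - 6*fxx^2*fxy*fxyy + fxx^3*fyyy) * v) * hc
        have hv4 : v ^ 4 ≠ 0 := pow_ne_zero _ hv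
        exact (mul_eq_zero.mp key).resolve_right hv4
  · rintro ⟨hdisc, hR⟩
    rcases eq_or_ne fxx 0 with hfxx | hfxx
    · rcases eq_or_ne fxxx 0 with hfxxx | hfxxx
      · exact ⟨1, 0, by simp, by rw [hfxx]; ring, by rw [hfxxx]; ring⟩
      · refine ⟨-fyy, 2 * fxy, ?_, ?_, ?_⟩
        · intro h
          have h1 : -fyy = 0 ∧ 2 * fxy = 0 := by
            constructor <;> [exact congrArg Prod.fst h; exact congrArg Prod.snd h]
          exact hQ ⟨hfxx, by linarith [h1.2], by linarith [h1.1]⟩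
        · linear_combination fyy ^ 2 * hfxx
        · have hK : fxxx * (fxxx * (-fyy) ^ 3 + 3 * fxxy * (-fyy) ^ 2 * (2 * fxy)
              + 3 * fxyy * (-fyy) * (2 * fxy) ^ 2 + fyyy * (2 * fxy) ^ 3) = 0 := by
            linear_combination (-1 : ℝ) * hR
              + (9*fyy^2*fxxy^2 - 6*fyy^2*fxxx*fxyy - 18*fxy*fyy*fxxy*fxyy
                 + 6*fxy*fyy*fxxx*fyyy + 12*fxy^2*fxxy*fyyy + 9*fxx*fyy*fxyy^2
                 - 6*fxx*fyy*fxxy*fyyy - 6*fxx*fxy*fxyy*fyyy + fxx^2*fyyy^2) * hfxx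
          exact (mul_eq_zero.mp hK).resolve_left hfxxx
    · set s := Real.sqrt (fxy ^ 2 - fxx * fyy) with hs_def
      have hs : s ^ 2 = fxy ^ 2 - fxx * fyy := Real.sq_sqrt (by nlinarith)
      have key : (fxxx * (-fxy + s) ^ 3 + 3 * fxxy * (-fxy + s) ^ 2 * fxx
            + 3 * fxyy * (-fxy + s) * fxx ^ 2 + fyyy * fxx ^ 3) *
          (fxxx * (-fxy - s) ^ 3 + 3 * fxxy * (-fxy - s) ^ 2 * fxx
            + 3 * fxyy * (-fxy - s) * fxx ^ 2 + fyyy * fxx ^ 3) = 0 := by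
        linear_combination fxx ^ 3 * hR
          + (-(fxxx^2)*s^4 + 2*fxy^2*fxxx^2*s^2 - fxy^4*fxxx^2 + fxx*fyy*fxxx^2*s^2
             - 6*fxx*fxy*fxxx*fxxy*s^2 - fxx*fxy^2*fyy*fxxx^2 + 6*fxx*fxy^3*fxxx*fxxy
             + 9*fxx^2*fxxy^2*s^2 - 6*fxx^2*fxxx*fxyy*s^2 - fxx^2*fyy^2*fxxx^2
             + 6*fxx^2*fxy*fyy*fxxx*fxxy - 9*fxx^2*fxy^2*fxxy^2 - 6*fxx^2*fxy^2*fxxx*fxyy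
             - 9*fxx^3*fyy*fxxy^2 + 6*fxx^3*fyy*fxxx*fxyy + 18*fxx^3*fxy*fxxy*fxyy
             - 6*fxx^3*fxy*fxxx*fyyy - 9*fxx^4*fxyy^2 + 6*fxx^4*fxxy*fyyy) * hs
      rcases mul_eq_zero.mp key with h | h
      · refine ⟨-fxy + s, fxx, ?_, by linear_combination fxx * hs, by linear_combination h⟩
        intro hcon
        exact hfxx (congrArg Prod.snd hcon)
      · refine ⟨-fxy - s, fxx, ?_, by linear_combination fxx * hs, by linear_combination h⟩
        intro hcon
        exact hfxx (congrArg Prod.snd hcon)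
end

section
/- Let f be C^3 on an open disk with f_xx f_yy - f_xy² < 0 everywhere, and suppose (u,v) : D → ℝ² is a C^1 vector field with u² + v² = 1 satisfying both f_xx u² + 2 f_xy uv + f_yy v² = 0 and f_xxx u³ + 3 f_xxy u²v + 3 f_xyy uv² + f_yyy v³ = 0 at every point. Then every integral curve (x(t), y(t)) of the field (i.e., with x'(t) = u(x(t),y(t)), y'(t) = v(x(t),y(t))) is a straight line segment, and t ↦ f(x(t), y(t)) is an affine function of t; hence the graph of f contains a line segment through each point. -/
open Real Set

lemma slice_x {G : ℝ × ℝ → ℝ} {G' : ℝ × ℝ →L[ℝ] ℝ} {x y : ℝ} (h : HasFDerivAt G G' (x, y)) :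
    HasDerivAt (fun s => G (s, y)) (G' (1, 0)) x := by
  exact (h.comp_hasDerivAt x ((hasDerivAt_id x).prodMk (hasDerivAt_const x y))).congr_deriv (by simp)

lemma slice_y {G : ℝ × ℝ → ℝ} {G' : ℝ × ℝ →L[ℝ] ℝ} {x y : ℝ} (h : HasFDerivAt G G' (x, y)) :
    HasDerivAt (fun s => G (x, s)) (G' (0, 1)) y := by
  exact (h.comp_hasDerivAt y ((hasDerivAt_const y x).prodMk (hasDerivAt_id y))).congr_deriv (by simp)

section Bridge

variable {f : ℝ → ℝ → ℝ} {B : Set (ℝ × ℝ)} {F : ℝ × ℝ → ℝ} (hB : IsOpen B)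
  (hFf : ∀ x y : ℝ, F (x, y) = f x y)
  (hf : ContDiffOn ℝ 3 F B)

include hB hFf hf

lemma hdF : ∀ q ∈ B, HasFDerivAt F (fderiv ℝ F q) q := fun q hq =>
  (((hf.differentiableOn (by norm_num)).differentiableAt (hB.mem_nhds hq)).hasFDerivAt)

lemma hG0c : ContDiffOn ℝ 2 (fderiv ℝ F) B := hf.fderiv_of_isOpen hB (by norm_num)

lemma hG1c : ContDiffOn ℝ 1 (fderiv ℝ (fderiv ℝ F)) B :=
  (hG0c hB hFf hf).fderiv_of_isOpen hB (by norm_num)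

lemma hdG0 : ∀ q ∈ B, HasFDerivAt (fderiv ℝ F) (fderiv ℝ (fderiv ℝ F) q) q := fun q hq =>
  ((((hG0c hB hFf hf).differentiableOn (by norm_num)).differentiableAt (hB.mem_nhds hq)).hasFDerivAt)

lemma hdG1 : ∀ q ∈ B, HasFDerivAt (fderiv ℝ (fderiv ℝ F))
    (fderiv ℝ (fderiv ℝ (fderiv ℝ F)) q) q := fun q hq =>
  ((((hG1c hB hFf hf).differentiableOn (by norm_num)).differentiableAt (hB.mem_nhds hq)).hasFDerivAt)

/-- derivative of the scalar function `p ↦ D²F p i j`. -/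
lemma hPhi2 (i j : ℝ × ℝ) : ∀ q ∈ B, HasFDerivAt (fun p => fderiv ℝ (fderiv ℝ F) p i j)
    (((ContinuousLinearMap.apply ℝ ℝ j).comp
      (ContinuousLinearMap.apply ℝ ((ℝ × ℝ) →L[ℝ] ℝ) i)).comp
      (fderiv ℝ (fderiv ℝ (fderiv ℝ F)) q)) q := by
  intro q hq
  have h := (((ContinuousLinearMap.apply ℝ ℝ j).comp
      (ContinuousLinearMap.apply ℝ ((ℝ × ℝ) →L[ℝ] ℝ) i)).hasFDerivAt).comp (f := fderiv ℝ (fderiv ℝ F))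
      (f' := fderiv ℝ (fderiv ℝ (fderiv ℝ F)) q) q (hdG1 hB hFf hf q hq)
  exact h.congr_of_eventuallyEq (Filter.Eventually.of_forall fun p => by simp)

/-- derivative of the scalar function `p ↦ DF p i`. -/
lemma hPhi1 (i : ℝ × ℝ) : ∀ q ∈ B, HasFDerivAt (fun p => fderiv ℝ F p i)
    ((ContinuousLinearMap.apply ℝ ℝ i).comp (fderiv ℝ (fderiv ℝ F) q)) q := by
  intro q hq
  have h := ((ContinuousLinearMap.apply ℝ ℝ i).hasFDerivAt).comp q (hdG0 hB hFf hf q hq)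
  exact h.congr_of_eventuallyEq (Filter.Eventually.of_forall fun p => by simp)

lemma hpdx1 : ∀ x y, (x, y) ∈ B → pdx f x y = fderiv ℝ F (x, y) (1, 0) := by
  intro x y h
  have hfun : (fun s => f s y) = (fun s => F (s, y)) := funext fun s => (hFf s y).symm
  show deriv (fun s => f s y) x = _
  rw [hfun]
  exact (slice_x (hdF hB hFf hf (x, y) h)).deriv

lemma hpdy1 : ∀ x y, (x, y) ∈ B → pdy f x y = fderiv ℝ F (x, y) (0, 1) := by
  intro x y h
  have hfun : (fun s => f x s) = (fun s => F (x, s)) := funext fun s => (hFf x s).symm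
  show deriv (fun s => f x s) y = _
  rw [hfun]
  exact (slice_y (hdF hB hFf hf (x, y) h)).deriv

lemma hpdx2 : ∀ x y, (x, y) ∈ B →
    pdx (pdx f) x y = fderiv ℝ (fderiv ℝ F) (x, y) (1, 0) (1, 0) := by
  intro x y h
  have hnb : {s : ℝ | (s, y) ∈ B} ∈ nhds x :=
    (Continuous.continuousAt (by fun_prop)).preimage_mem_nhds (hB.mem_nhds h)
  have hev : (fun s => pdx f s y) =ᶠ[nhds x] (fun s => fderiv ℝ F (s, y) (1, 0)) := by
    filter_upwards [hnb] with s hs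
    exact hpdx1 hB hFf hf s y hs
  show deriv (fun s => pdx f s y) x = _
  rw [hev.deriv_eq, (slice_x (hPhi1 hB hFf hf (1, 0) (x, y) h)).deriv]
  simp

lemma hpdy2 : ∀ x y, (x, y) ∈ B →
    pdy (pdx f) x y = fderiv ℝ (fderiv ℝ F) (x, y) (0, 1) (1, 0) := by
  intro x y h
  have hnb : {s : ℝ | (x, s) ∈ B} ∈ nhds y :=
    (Continuous.continuousAt (by fun_prop)).preimage_mem_nhds (hB.mem_nhds h)
  have hev : (fun s => pdx f x s) =ᶠ[nhds y] (fun s => fderiv ℝ F (x, s) (1, 0)) := by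
    filter_upwards [hnb] with s hs
    exact hpdx1 hB hFf hf x s hs
  show deriv (fun s => pdx f x s) y = _
  rw [hev.deriv_eq, (slice_y (hPhi1 hB hFf hf (1, 0) (x, y) h)).deriv]
  simp

lemma hpdyy2 : ∀ x y, (x, y) ∈ B →
    pdy (pdy f) x y = fderiv ℝ (fderiv ℝ F) (x, y) (0, 1) (0, 1) := by
  intro x y h
  have hnb : {s : ℝ | (x, s) ∈ B} ∈ nhds y :=
    (Continuous.continuousAt (by fun_prop)).preimage_mem_nhds (hB.mem_nhds h)
  have hev : (fun s => pdy f x s) =ᶠ[nhds y] (fun s => fderiv ℝ F (x, s) (0, 1)) := by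
    filter_upwards [hnb] with s hs
    exact hpdy1 hB hFf hf x s hs
  show deriv (fun s => pdy f x s) y = _
  rw [hev.deriv_eq, (slice_y (hPhi1 hB hFf hf (0, 1) (x, y) h)).deriv]
  simp

lemma hpdx3 : ∀ x y, (x, y) ∈ B →
    pdx (pdx (pdx f)) x y = fderiv ℝ (fderiv ℝ (fderiv ℝ F)) (x, y) (1, 0) (1, 0) (1, 0) := by
  intro x y h
  have hnb : {s : ℝ | (s, y) ∈ B} ∈ nhds x :=
    (Continuous.continuousAt (by fun_prop)).preimage_mem_nhds (hB.mem_nhds h)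
  have hev : (fun s => pdx (pdx f) s y) =ᶠ[nhds x]
      (fun s => fderiv ℝ (fderiv ℝ F) (s, y) (1, 0) (1, 0)) := by
    filter_upwards [hnb] with s hs
    exact hpdx2 hB hFf hf s y hs
  show deriv (fun s => pdx (pdx f) s y) x = _
  rw [hev.deriv_eq, (slice_x (hPhi2 hB hFf hf (1, 0) (1, 0) (x, y) h)).deriv]
  simp

lemma hpdy3a : ∀ x y, (x, y) ∈ B →
    pdy (pdx (pdx f)) x y = fderiv ℝ (fderiv ℝ (fderiv ℝ F)) (x, y) (0, 1) (1, 0) (1, 0) := by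
  intro x y h
  have hnb : {s : ℝ | (x, s) ∈ B} ∈ nhds y :=
    (Continuous.continuousAt (by fun_prop)).preimage_mem_nhds (hB.mem_nhds h)
  have hev : (fun s => pdx (pdx f) x s) =ᶠ[nhds y]
      (fun s => fderiv ℝ (fderiv ℝ F) (x, s) (1, 0) (1, 0)) := by
    filter_upwards [hnb] with s hs
    exact hpdx2 hB hFf hf x s hs
  show deriv (fun s => pdx (pdx f) x s) y = _
  rw [hev.deriv_eq, (slice_y (hPhi2 hB hFf hf (1, 0) (1, 0) (x, y) h)).deriv]
  simp

lemma hpdy3b : ∀ x y, (x, y) ∈ B →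
    pdy (pdy (pdx f)) x y = fderiv ℝ (fderiv ℝ (fderiv ℝ F)) (x, y) (0, 1) (0, 1) (1, 0) := by
  intro x y h
  have hnb : {s : ℝ | (x, s) ∈ B} ∈ nhds y :=
    (Continuous.continuousAt (by fun_prop)).preimage_mem_nhds (hB.mem_nhds h)
  have hev : (fun s => pdy (pdx f) x s) =ᶠ[nhds y]
      (fun s => fderiv ℝ (fderiv ℝ F) (x, s) (0, 1) (1, 0)) := by
    filter_upwards [hnb] with s hs
    exact hpdy2 hB hFf hf x s hs
  show deriv (fun s => pdy (pdx f) x s) y = _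
  rw [hev.deriv_eq, (slice_y (hPhi2 hB hFf hf (0, 1) (1, 0) (x, y) h)).deriv]
  simp

lemma hpdy3c : ∀ x y, (x, y) ∈ B →
    pdy (pdy (pdy f)) x y = fderiv ℝ (fderiv ℝ (fderiv ℝ F)) (x, y) (0, 1) (0, 1) (0, 1) := by
  intro x y h
  have hnb : {s : ℝ | (x, s) ∈ B} ∈ nhds y :=
    (Continuous.continuousAt (by fun_prop)).preimage_mem_nhds (hB.mem_nhds h)
  have hev : (fun s => pdy (pdy f) x s) =ᶠ[nhds y]
      (fun s => fderiv ℝ (fderiv ℝ F) (x, s) (0, 1) (0, 1)) := by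
    filter_upwards [hnb] with s hs
    exact hpdyy2 hB hFf hf x s hs
  show deriv (fun s => pdy (pdy f) x s) y = _
  rw [hev.deriv_eq, (slice_y (hPhi2 hB hFf hf (0, 1) (0, 1) (x, y) h)).deriv]
  simp

lemma symH : ∀ q ∈ B, ∀ a b : ℝ × ℝ,
    fderiv ℝ (fderiv ℝ F) q a b = fderiv ℝ (fderiv ℝ F) q b a := fun q hq =>
  (hf.contDiffAt (hB.mem_nhds hq)).isSymmSndFDerivAt (by norm_num)

lemma symT12 : ∀ q ∈ B, ∀ a b : ℝ × ℝ,
    fderiv ℝ (fderiv ℝ (fderiv ℝ F)) q a b = fderiv ℝ (fderiv ℝ (fderiv ℝ F)) q b a :=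
  fun q hq => ((hG0c hB hFf hf).contDiffAt (hB.mem_nhds hq)).isSymmSndFDerivAt (by norm_num)

lemma symT23 : ∀ q ∈ B, ∀ z i j : ℝ × ℝ,
    fderiv ℝ (fderiv ℝ (fderiv ℝ F)) q z i j = fderiv ℝ (fderiv ℝ (fderiv ℝ F)) q z j i := by
  intro q hq z i j
  have h1 := (hPhi2 hB hFf hf i j q hq).fderiv
  have h2 := (hPhi2 hB hFf hf j i q hq).fderiv
  have hev : (fun p => fderiv ℝ (fderiv ℝ F) p i j) =ᶠ[nhds q]
      (fun p => fderiv ℝ (fderiv ℝ F) p j i) := by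
    filter_upwards [hB.mem_nhds hq] with p hp
    exact symH hB hFf hf p hp i j
  calc fderiv ℝ (fderiv ℝ (fderiv ℝ F)) q z i j
      = fderiv ℝ (fun p => fderiv ℝ (fderiv ℝ F) p i j) q z := by rw [h1]; simp
    _ = fderiv ℝ (fun p => fderiv ℝ (fderiv ℝ F) p j i) q z := by rw [hev.fderiv_eq]
    _ = fderiv ℝ (fderiv ℝ (fderiv ℝ F)) q z j i := by rw [h2]; simp

end Bridge

lemma clm_decomp {E : Type*} [NormedAddCommGroup E] [NormedSpace ℝ E]
    (L : ℝ × ℝ →L[ℝ] E) (p r : ℝ) : L (p, r) = p • L (1, 0) + r • L (0, 1) := by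
  have h : (p, r) = p • ((1:ℝ), (0:ℝ)) + r • ((0:ℝ), (1:ℝ)) := by
    simp [Prod.ext_iff]
  rw [h, map_add, map_smul, map_smul]

lemma const01 {g : ℝ → ℝ} {ε : ℝ} (hε : 0 < ε)
    (hg : ∀ t ∈ Ioo (-ε) ε, HasDerivAt g 0 t) :
    ∀ t ∈ Ioo (-ε) ε, g t = g 0 := by
  intro t ht
  have h0 : (0:ℝ) ∈ Ioo (-ε) ε := ⟨by linarith, hε⟩
  refine (convex_Ioo (-ε) ε).is_const_of_fderivWithin_eq_zero (𝕜 := ℝ)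
    (fun x hx => ((hg x hx).differentiableAt).differentiableWithinAt) (fun x hx => ?_) ht h0
  rw [fderivWithin_of_isOpen isOpen_Ioo hx]
  have h := (hg x hx).hasFDerivAt.fderiv
  rw [h]
  ext
  simp

lemma alg_key (a b c U V du dv : ℝ)
    (h1 : a*U^2 + 2*b*U*V + c*V^2 = 0)
    (h2 : a*c - b^2 < 0)
    (h3 : U^2 + V^2 = 1)
    (h4 : U*du + V*dv = 0)
    (h7 : (a*U + b*V)*du + (b*U + c*V)*dv = 0) : du = 0 ∧ dv = 0 := by
  have hdu : du = -V*(U*dv - V*du) := by linear_combination U*h4 - du*h3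
  have hdv : dv = U*(U*dv - V*du) := by linear_combination V*h4 - dv*h3
  have hnz : (b*U + c*V)*U - (a*U + b*V)*V ≠ 0 := by
    intro h0
    have hA : a*U + b*V = 0 := by linear_combination U*h1 - V*h0 - (a*U + b*V)*h3
    have hBv : b*U + c*V = 0 := by linear_combination V*h1 + U*h0 - (b*U + c*V)*h3
    have hU0 : U = 0 := by
      have hx : (a*c - b^2)*U = 0 := by linear_combination c*hA - b*hBv
      rcases mul_eq_zero.mp hx with h | h
      · exact absurd h (ne_of_lt h2)
      · exact h
    have hV0 : V = 0 := by
      have hx : (a*c - b^2)*V = 0 := by linear_combination a*hBv - b*hA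
      rcases mul_eq_zero.mp hx with h | h
      · exact absurd h (ne_of_lt h2)
      · exact h
    rw [hU0, hV0] at h3; norm_num at h3
  have hlam : ((b*U + c*V)*U - (a*U + b*V)*V) * (U*dv - V*du) = 0 := by
    linear_combination h7 - (a*U + b*V)*hdu - (b*U + c*V)*hdv
  have hl0 : U*dv - V*du = 0 := (mul_eq_zero.mp hlam).resolve_left hnz
  constructor
  · rw [hdu, hl0]; ring
  · rw [hdv, hl0]; ring


set_option maxHeartbeats 2000000 in
/-- given a unit `C¹` solution field `(u,v)` of the two asymptotic
equations on a disk where the Hessian determinant is negative, every integral curve of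
the field is a straight line segment, and `f` is affine along it. -/
theorem stmt_6 (f : ℝ → ℝ → ℝ) (c : ℝ × ℝ) (ρ : ℝ)
    (hf : ContDiffOn ℝ 3 (fun q : ℝ × ℝ => f q.1 q.2) (Metric.ball c ρ))
    (hK : ∀ q ∈ Metric.ball c ρ,
      pdx (pdx f) q.1 q.2 * pdy (pdy f) q.1 q.2 - (pdy (pdx f) q.1 q.2) ^ 2 < 0)
    (u v : ℝ × ℝ → ℝ)
    (hu : ContDiffOn ℝ 1 u (Metric.ball c ρ)) (hv : ContDiffOn ℝ 1 v (Metric.ball c ρ))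
    (hunit : ∀ q ∈ Metric.ball c ρ, (u q) ^ 2 + (v q) ^ 2 = 1)
    (heq1 : ∀ q ∈ Metric.ball c ρ,
      pdx (pdx f) q.1 q.2 * (u q) ^ 2 + 2 * pdy (pdx f) q.1 q.2 * u q * v q
        + pdy (pdy f) q.1 q.2 * (v q) ^ 2 = 0)
    (heq2 : ∀ q ∈ Metric.ball c ρ,
      pdx (pdx (pdx f)) q.1 q.2 * (u q) ^ 3 + 3 * pdy (pdx (pdx f)) q.1 q.2 * (u q) ^ 2 * v q
        + 3 * pdy (pdy (pdx f)) q.1 q.2 * u q * (v q) ^ 2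
        + pdy (pdy (pdy f)) q.1 q.2 * (v q) ^ 3 = 0) :
    ∀ (X Y : ℝ → ℝ) (ε : ℝ), 0 < ε →
      (∀ t ∈ Ioo (-ε) ε, (X t, Y t) ∈ Metric.ball c ρ) →
      (∀ t ∈ Ioo (-ε) ε, HasDerivAt X (u (X t, Y t)) t ∧ HasDerivAt Y (v (X t, Y t)) t) →
      ∃ x₀ y₀ u₀ v₀ α β : ℝ, ∀ t ∈ Ioo (-ε) ε,
        X t = x₀ + u₀ * t ∧ Y t = y₀ + v₀ * t ∧ f (X t) (Y t) = α + β * t := by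
  intro X Y ε hε hball hODE
  have hB : IsOpen (Metric.ball c ρ) := Metric.isOpen_ball
  set F : ℝ × ℝ → ℝ := fun q => f q.1 q.2 with hFdef
  have hFf : ∀ x y : ℝ, F (x, y) = f x y := fun _ _ => rfl
  have h0 : (0:ℝ) ∈ Ioo (-ε) ε := ⟨by linarith, hε⟩
  have hγ : ∀ t ∈ Ioo (-ε) ε,
      HasDerivAt (fun s => (X s, Y s)) (u (X t, Y t), v (X t, Y t)) t :=
    fun t ht => ((hODE t ht).1).prodMk ((hODE t ht).2)
  -- the key step: the field is constant along the curve
  have key : ∀ t ∈ Ioo (-ε) ε, HasDerivAt (fun s => u (X s, Y s)) 0 t ∧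
      HasDerivAt (fun s => v (X s, Y s)) 0 t := by
    intro t ht
    have hqB : (X t, Y t) ∈ Metric.ball c ρ := hball t ht
    have hud : HasFDerivAt u (fderiv ℝ u (X t, Y t)) (X t, Y t) :=
      ((hu.differentiableOn (by norm_num)).differentiableAt (hB.mem_nhds hqB)).hasFDerivAt
    have hvd : HasFDerivAt v (fderiv ℝ v (X t, Y t)) (X t, Y t) :=
      ((hv.differentiableOn (by norm_num)).differentiableAt (hB.mem_nhds hqB)).hasFDerivAt
    set du := fderiv ℝ u (X t, Y t) (u (X t, Y t), v (X t, Y t)) with hdudef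
    set dv := fderiv ℝ v (X t, Y t) (u (X t, Y t), v (X t, Y t)) with hdvdef
    have hU : HasDerivAt (fun s => u (X s, Y s)) du t := hud.comp_hasDerivAt t (hγ t ht)
    have hV : HasDerivAt (fun s => v (X s, Y s)) dv t := hvd.comp_hasDerivAt t (hγ t ht)
    -- differentiate the unit identity along the curve
    have hQ := (hU.pow 2).add (hV.pow 2)
    have hQ0 := (hQ.congr_of_eventuallyEq (f₁ := fun _ : ℝ => (1:ℝ))
      (by filter_upwards [isOpen_Ioo.mem_nhds ht] with s hs
          exact (hunit _ (hball s hs)).symm)).unique (hasDerivAt_const t 1)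
    have h4 : u (X t, Y t) * du + v (X t, Y t) * dv = 0 := by
      norm_num at hQ0
      linarith
    -- derivative of second-derivative components along the curve
    have hab : ∀ i j : ℝ × ℝ, HasDerivAt (fun s => fderiv ℝ (fderiv ℝ F) (X s, Y s) i j)
        (fderiv ℝ (fderiv ℝ (fderiv ℝ F)) (X t, Y t) (u (X t, Y t), v (X t, Y t)) i j) t := by
      intro i j
      have h := (hPhi2 hB hFf hf i j _ hqB).comp_hasDerivAt t (hγ t ht)
      exact h
    -- differentiate the first asymptotic identity along the curve
    have hP := (((hab (1,0) (1,0)).mul (hU.pow 2)).add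
        ((((hasDerivAt_const t (2:ℝ)).mul (hab (0,1) (1,0))).mul hU).mul hV)).add
        ((hab (0,1) (0,1)).mul (hV.pow 2))
    have hD0 := (hP.congr_of_eventuallyEq (f₁ := fun _ : ℝ => (0:ℝ))
      (by filter_upwards [isOpen_Ioo.mem_nhds ht] with s hs
          have e := heq1 (X s, Y s) (hball s hs)
          dsimp only at e
          rw [hpdx2 hB hFf hf _ _ (hball s hs), hpdy2 hB hFf hf _ _ (hball s hs),
            hpdyy2 hB hFf hf _ _ (hball s hs)] at e
          exact e.symm)).unique (hasDerivAt_const t 0)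
    -- the third-order identity
    have h6 := heq2 (X t, Y t) hqB
    dsimp only at h6
    rw [hpdx3 hB hFf hf _ _ hqB, hpdy3a hB hFf hf _ _ hqB, hpdy3b hB hFf hf _ _ hqB,
      hpdy3c hB hFf hf _ _ hqB] at h6
    -- decompose the directional third derivative into components
    have hdec : ∀ i j : ℝ × ℝ,
        fderiv ℝ (fderiv ℝ (fderiv ℝ F)) (X t, Y t) (u (X t, Y t), v (X t, Y t)) i j
          = u (X t, Y t) * fderiv ℝ (fderiv ℝ (fderiv ℝ F)) (X t, Y t) (1, 0) i j
            + v (X t, Y t) * fderiv ℝ (fderiv ℝ (fderiv ℝ F)) (X t, Y t) (0, 1) i j := by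
      intro i j
      rw [clm_decomp (fderiv ℝ (fderiv ℝ (fderiv ℝ F)) (X t, Y t)) (u (X t, Y t)) (v (X t, Y t))]
      simp
    have hs1 : fderiv ℝ (fderiv ℝ (fderiv ℝ F)) (X t, Y t) (1, 0) (0, 1) (1, 0)
        = fderiv ℝ (fderiv ℝ (fderiv ℝ F)) (X t, Y t) (0, 1) (1, 0) (1, 0) := by
      rw [symT12 hB hFf hf _ hqB (1, 0) (0, 1)]
    have hs2 : fderiv ℝ (fderiv ℝ (fderiv ℝ F)) (X t, Y t) (1, 0) (0, 1) (0, 1)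
        = fderiv ℝ (fderiv ℝ (fderiv ℝ F)) (X t, Y t) (0, 1) (0, 1) (1, 0) := by
      rw [symT12 hB hFf hf _ hqB (1, 0) (0, 1)]
      exact symT23 hB hFf hf _ hqB (0, 1) (1, 0) (0, 1)
    rw [hdec (1,0) (1,0), hdec (0,1) (1,0), hdec (0,1) (0,1), hs1, hs2] at hD0
    -- the reduced linear relation
    have h7 : (fderiv ℝ (fderiv ℝ F) (X t, Y t) (1,0) (1,0) * u (X t, Y t)
          + fderiv ℝ (fderiv ℝ F) (X t, Y t) (0,1) (1,0) * v (X t, Y t)) * du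
        + (fderiv ℝ (fderiv ℝ F) (X t, Y t) (0,1) (1,0) * u (X t, Y t)
          + fderiv ℝ (fderiv ℝ F) (X t, Y t) (0,1) (0,1) * v (X t, Y t)) * dv = 0 := by
      norm_num at hD0
      linear_combination hD0 / 2 - h6 / 2
    -- bridged pointwise hypotheses
    have h1 := heq1 (X t, Y t) hqB
    dsimp only at h1
    rw [hpdx2 hB hFf hf _ _ hqB, hpdy2 hB hFf hf _ _ hqB, hpdyy2 hB hFf hf _ _ hqB] at h1
    have h2 := hK (X t, Y t) hqB
    dsimp only at h2
    rw [hpdx2 hB hFf hf _ _ hqB, hpdy2 hB hFf hf _ _ hqB, hpdyy2 hB hFf hf _ _ hqB] at h2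
    have h3 := hunit (X t, Y t) hqB
    have halg := alg_key (fderiv ℝ (fderiv ℝ F) (X t, Y t) (1,0) (1,0))
      (fderiv ℝ (fderiv ℝ F) (X t, Y t) (0,1) (1,0))
      (fderiv ℝ (fderiv ℝ F) (X t, Y t) (0,1) (0,1))
      (u (X t, Y t)) (v (X t, Y t)) du dv h1 (by nlinarith [h2]) h3 h4 h7
    exact ⟨halg.1 ▸ hU, halg.2 ▸ hV⟩
  -- the field is constant along the curve
  have hUc : ∀ t ∈ Ioo (-ε) ε, u (X t, Y t) = u (X 0, Y 0) :=
    const01 hε (fun t ht => (key t ht).1)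
  have hVc : ∀ t ∈ Ioo (-ε) ε, v (X t, Y t) = v (X 0, Y 0) :=
    const01 hε (fun t ht => (key t ht).2)
  -- the curve is a straight line
  have hX : ∀ t ∈ Ioo (-ε) ε, X t = X 0 + u (X 0, Y 0) * t := by
    intro t ht
    have hg : ∀ s ∈ Ioo (-ε) ε, HasDerivAt (fun r => X r - u (X 0, Y 0) * r) 0 s := by
      intro s hs
      have h1 := (hODE s hs).1.sub ((hasDerivAt_id s).const_mul (u (X 0, Y 0)))
      rw [hUc s hs] at h1
      exact h1.congr_deriv (by simp)
    have h' := const01 hε hg t ht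
    simp only [mul_zero, sub_zero] at h'
    linarith
  have hY : ∀ t ∈ Ioo (-ε) ε, Y t = Y 0 + v (X 0, Y 0) * t := by
    intro t ht
    have hg : ∀ s ∈ Ioo (-ε) ε, HasDerivAt (fun r => Y r - v (X 0, Y 0) * r) 0 s := by
      intro s hs
      have h1 := (hODE s hs).2.sub ((hasDerivAt_id s).const_mul (v (X 0, Y 0)))
      rw [hVc s hs] at h1
      exact h1.congr_deriv (by simp)
    have h' := const01 hε hg t ht
    simp only [mul_zero, sub_zero] at h'
    linarith
  -- f is affine along the curve
  have hψ : ∀ t ∈ Ioo (-ε) ε,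
      HasDerivAt (fun s => fderiv ℝ F (X s, Y s) (u (X 0, Y 0), v (X 0, Y 0))) 0 t := by
    intro t ht
    have hqB := hball t ht
    have h := (hPhi1 hB hFf hf (u (X 0, Y 0), v (X 0, Y 0)) _ hqB).comp_hasDerivAt t (hγ t ht)
    have hval : fderiv ℝ (fderiv ℝ F) (X t, Y t) (u (X t, Y t), v (X t, Y t))
        (u (X 0, Y 0), v (X 0, Y 0)) = 0 := by
      rw [hUc t ht, hVc t ht]
      rw [clm_decomp (fderiv ℝ (fderiv ℝ F) (X t, Y t)) (u (X 0, Y 0)) (v (X 0, Y 0))]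
      simp only [ContinuousLinearMap.add_apply, ContinuousLinearMap.coe_smul', Pi.smul_apply,
        smul_eq_mul]
      rw [clm_decomp (fderiv ℝ (fderiv ℝ F) (X t, Y t) (1, 0)) (u (X 0, Y 0)) (v (X 0, Y 0)),
        clm_decomp (fderiv ℝ (fderiv ℝ F) (X t, Y t) (0, 1)) (u (X 0, Y 0)) (v (X 0, Y 0))]
      simp only [smul_eq_mul]
      have e := heq1 (X t, Y t) hqB
      dsimp only at e
      rw [hpdx2 hB hFf hf _ _ hqB, hpdy2 hB hFf hf _ _ hqB, hpdyy2 hB hFf hf _ _ hqB,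
        hUc t ht, hVc t ht] at e
      have hsym := symH hB hFf hf _ hqB (1, 0) (0, 1)
      linear_combination e + (u (X 0, Y 0) * v (X 0, Y 0)) * hsym
    have h' : HasDerivAt (fun s => fderiv ℝ F (X s, Y s) (u (X 0, Y 0), v (X 0, Y 0)))
        (fderiv ℝ (fderiv ℝ F) (X t, Y t) (u (X t, Y t), v (X t, Y t))
          (u (X 0, Y 0), v (X 0, Y 0))) t := by
      exact h
    rw [hval] at h'
    exact h'
  have hψc := const01 hε hψ
  have hfd : ∀ t ∈ Ioo (-ε) ε, HasDerivAt (fun s => F (X s, Y s))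
      (fderiv ℝ F (X 0, Y 0) (u (X 0, Y 0), v (X 0, Y 0))) t := by
    intro t ht
    have h := (hdF hB hFf hf _ (hball t ht)).comp_hasDerivAt t (hγ t ht)
    have hval : fderiv ℝ F (X t, Y t) (u (X t, Y t), v (X t, Y t))
        = fderiv ℝ F (X 0, Y 0) (u (X 0, Y 0), v (X 0, Y 0)) := by
      rw [hUc t ht, hVc t ht]
      exact hψc t ht
    rw [hval] at h
    exact h
  have hfa : ∀ t ∈ Ioo (-ε) ε, F (X t, Y t) = F (X 0, Y 0)
      + fderiv ℝ F (X 0, Y 0) (u (X 0, Y 0), v (X 0, Y 0)) * t := by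
    intro t ht
    have hg : ∀ s ∈ Ioo (-ε) ε, HasDerivAt (fun r => F (X r, Y r)
        - fderiv ℝ F (X 0, Y 0) (u (X 0, Y 0), v (X 0, Y 0)) * r) 0 s := by
      intro s hs
      exact ((hfd s hs).sub ((hasDerivAt_id s).const_mul
        (fderiv ℝ F (X 0, Y 0) (u (X 0, Y 0), v (X 0, Y 0))))).congr_deriv (by simp)
    have h' := const01 hε hg t ht
    simp only [mul_zero, sub_zero] at h'
    linarith
  exact ⟨X 0, Y 0, u (X 0, Y 0), v (X 0, Y 0), f (X 0) (Y 0),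
    fderiv ℝ F (X 0, Y 0) (u (X 0, Y 0), v (X 0, Y 0)),
    fun t ht => ⟨hX t ht, hY t ht, hfa t ht⟩⟩
end

section
/- Let f be a C^2 function near (x,y). The curve t ↦ (x + v sin t + u(1-cos t), y - u sin t + v(1-cos t), z + a sin t + b(1-cos t)) has contact of order 2 with the graph of f at t = 0 if and only if z = f(x,y), a = f_x v - f_y u, and b = f_x u + f_y v + f_xx v² - 2 f_xy u v + f_yy u², where all partial derivatives are evaluated at (x,y). -/
open Real Set Filter

lemma aux_tendsto (g : ℝ → ℝ) (hg : ContDiffAt ℝ 2 g 0) (h0 : g 0 = 0)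
    (h1 : deriv g 0 = 0) :
    Tendsto (fun t => g t / t ^ 2) (nhdsWithin 0 {(0:ℝ)}ᶜ)
      (nhds (deriv (deriv g) 0 / 2)) := by
  have hev : ∀ᶠ t in nhds (0:ℝ), ContDiffAt ℝ 2 g t := hg.eventually (by simp)
  have hff' : ∀ᶠ t in nhds (0:ℝ), HasDerivAt g (deriv g t) t := by
    filter_upwards [hev] with t ht
    exact (ht.differentiableAt (by norm_num)).hasDerivAt
  have hd1 : DifferentiableAt ℝ (deriv g) 0 := by
    have h' : ContDiffAt ℝ 1 (fderiv ℝ g) 0 := hg.fderiv_right (le_refl 2)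
    exact (h'.differentiableAt (by norm_num)).clm_apply (differentiableAt_const 1)
  have hslope : Tendsto (slope (deriv g) 0) (nhdsWithin 0 {(0:ℝ)}ᶜ)
      (nhds (deriv (deriv g) 0)) :=
    hasDerivAt_iff_tendsto_slope.1 hd1.hasDerivAt
  apply HasDerivAt.lhopital_zero_nhdsNE (f' := fun t => deriv g t) (g' := fun t => 2 * t)
  · exact eventually_nhdsWithin_of_eventually_nhds hff'
  · filter_upwards with t
    simpa using (hasDerivAt_pow 2 t)
  · filter_upwards [self_mem_nhdsWithin] with t ht
    simp only [mem_compl_iff, mem_singleton_iff] at ht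
    positivity
  · have := (hg.continuousAt).tendsto
    rw [h0] at this
    exact tendsto_nhdsWithin_of_tendsto_nhds this
  · have : Tendsto (fun t : ℝ => t ^ 2) (nhds 0) (nhds 0) := by
      simpa using (continuous_pow 2).tendsto (0:ℝ)
    exact tendsto_nhdsWithin_of_tendsto_nhds this
  · have heq : (fun t : ℝ => deriv g t / (2 * t)) = fun t => slope (deriv g) 0 t / 2 := by
      funext t
      simp [slope, h1, div_div, mul_comm]
      ring
    rw [heq]
    simpa using hslope.div_const 2

lemma key_iff (g : ℝ → ℝ) (hg : ContDiffAt ℝ 2 g 0) :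
    Tendsto (fun t => g t / t ^ 2) (nhdsWithin 0 {(0:ℝ)}ᶜ) (nhds 0)
    ↔ g 0 = 0 ∧ deriv g 0 = 0 ∧ deriv (deriv g) 0 = 0 := by
  constructor
  · intro H
    have h0 : g 0 = 0 := by
      have l1 : Tendsto g (nhdsWithin 0 {(0:ℝ)}ᶜ) (nhds (g 0)) :=
        tendsto_nhdsWithin_of_tendsto_nhds hg.continuousAt.tendsto
      have l2 : Tendsto g (nhdsWithin 0 {(0:ℝ)}ᶜ) (nhds 0) := by
        have := H.mul (tendsto_nhdsWithin_of_tendsto_nhds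
          ((continuous_pow 2).tendsto (0:ℝ)))
        simp only [ne_eq, OfNat.ofNat_ne_zero, not_false_eq_true, zero_pow, mul_zero] at this
        refine this.congr' ?_
        filter_upwards [self_mem_nhdsWithin] with t ht
        simp only [mem_compl_iff, mem_singleton_iff] at ht
        field_simp
      exact tendsto_nhds_unique l1 l2
    have h1 : deriv g 0 = 0 := by
      have hda : HasDerivAt g (deriv g 0) 0 :=
        (hg.differentiableAt (by norm_num)).hasDerivAt
      have l1 : Tendsto (fun t => g t / t) (nhdsWithin 0 {(0:ℝ)}ᶜ) (nhds (deriv g 0)) := by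
        have := hasDerivAt_iff_tendsto_slope.1 hda
        refine this.congr' ?_
        filter_upwards with t
        simp [slope, h0, div_eq_inv_mul]
      have l2 : Tendsto (fun t => g t / t) (nhdsWithin 0 {(0:ℝ)}ᶜ) (nhds 0) := by
        have := H.mul (tendsto_nhdsWithin_of_tendsto_nhds (continuous_id.tendsto (0:ℝ)))
        simp only [mul_zero, id, zero_mul] at this
        refine this.congr' ?_
        filter_upwards [self_mem_nhdsWithin] with t ht
        simp only [mem_compl_iff, mem_singleton_iff] at ht
        field_simp
      exact tendsto_nhds_unique l1 l2
    have h2 : deriv (deriv g) 0 = 0 := by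
      have := tendsto_nhds_unique (aux_tendsto g hg h0 h1) H
      linarith
    exact ⟨h0, h1, h2⟩
  · rintro ⟨h0, h1, h2⟩
    have := aux_tendsto g hg h0 h1
    rwa [h2, zero_div] at this

/-- the conic has second order contact with the graph of `f` at `t = 0`
iff `z = f`, `a = f_x v - f_y u` and `b = f_x u + f_y v + f_xx v² - 2 f_xy uv + f_yy u²`. -/
theorem stmt_8 (f : ℝ → ℝ → ℝ) (x y z a b u v : ℝ)
    (hf : ContDiffAt ℝ 2 (fun p : ℝ × ℝ => f p.1 p.2) (x, y))
    (huv : (u, v) ≠ ((0 : ℝ), (0 : ℝ))) :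
    Tendsto (fun t : ℝ =>
        (z + a * Real.sin t + b * (1 - Real.cos t)
          - f (x + v * Real.sin t + u * (1 - Real.cos t))
              (y - u * Real.sin t + v * (1 - Real.cos t))) / t ^ 2)
      (nhdsWithin 0 {(0 : ℝ)}ᶜ) (nhds 0)
    ↔ (z = f x y ∧
        a = pdx f x y * v - pdy f x y * u ∧
        b = pdx f x y * u + pdy f x y * v
            + pdx (pdx f) x y * v ^ 2 - 2 * pdy (pdx f) x y * u * v
            + pdy (pdy f) x y * u ^ 2) := by
  set F : ℝ × ℝ → ℝ := fun p => f p.1 p.2 with hF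
  set c : ℝ → ℝ × ℝ := fun t => (x + v * Real.sin t + u * (1 - Real.cos t),
    y - u * Real.sin t + v * (1 - Real.cos t)) with hcdef
  set c' : ℝ → ℝ × ℝ := fun t => (v * Real.cos t + u * Real.sin t,
    -u * Real.cos t + v * Real.sin t) with hc'def
  have hc0 : c 0 = (x, y) := by simp [hcdef]
  have hc'0 : c' 0 = (v, -u) := by simp [hc'def]
  have hcC : ContDiff ℝ 2 c := by
    apply ContDiff.of_le (m := 2) (n := ⊤) ?_ le_top
    apply ContDiff.prodMk
    · exact (contDiff_const.add (contDiff_const.mul Real.contDiff_sin)).add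
        (contDiff_const.mul (contDiff_const.sub Real.contDiff_cos))
    · exact (contDiff_const.sub (contDiff_const.mul Real.contDiff_sin)).add
        (contDiff_const.mul (contDiff_const.sub Real.contDiff_cos))
  have hc' : ∀ t, HasDerivAt c (c' t) t := by
    intro t
    apply HasDerivAt.prodMk
    · have h1 : HasDerivAt (fun t : ℝ => x + v * Real.sin t + u * (1 - Real.cos t))
          (0 + v * Real.cos t + u * (0 - -Real.sin t)) t := by
        exact (((hasDerivAt_const t x).add ((Real.hasDerivAt_sin t).const_mul v)).add
          (((hasDerivAt_const t (1:ℝ)).sub (Real.hasDerivAt_cos t)).const_mul u))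
      refine h1.congr_deriv ?_
      ring
    · have h1 : HasDerivAt (fun t : ℝ => y - u * Real.sin t + v * (1 - Real.cos t))
          (0 - u * Real.cos t + v * (0 - -Real.sin t)) t := by
        exact (((hasDerivAt_const t y).sub ((Real.hasDerivAt_sin t).const_mul u)).add
          (((hasDerivAt_const t (1:ℝ)).sub (Real.hasDerivAt_cos t)).const_mul v))
      refine h1.congr_deriv ?_
      ring
  have hc'' : HasDerivAt c' ((u, v) : ℝ × ℝ) 0 := by
    apply HasDerivAt.prodMk
    · have h1 : HasDerivAt (fun t : ℝ => v * Real.cos t + u * Real.sin t)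
          (v * -Real.sin 0 + u * Real.cos 0) 0 :=
        ((Real.hasDerivAt_cos 0).const_mul v).add ((Real.hasDerivAt_sin 0).const_mul u)
      refine h1.congr_deriv ?_
      simp
    · have h1 : HasDerivAt (fun t : ℝ => -u * Real.cos t + v * Real.sin t)
          (-u * -Real.sin 0 + v * Real.cos 0) 0 :=
        ((Real.hasDerivAt_cos 0).const_mul (-u)).add ((Real.hasDerivAt_sin 0).const_mul v)
      refine h1.congr_deriv ?_
      simp
  set L : ℝ × ℝ →L[ℝ] ℝ := fderiv ℝ F (x, y) with hLdef
  set Q := fderiv ℝ (fderiv ℝ F) (x, y) with hQdef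
  have hL : HasFDerivAt F L (x, y) := (hf.differentiableAt (by norm_num)).hasFDerivAt
  have hQ : HasFDerivAt (fderiv ℝ F) Q (x, y) :=
    ((hf.fderiv_right (m := 1) (by norm_num)).differentiableAt (by norm_num)).hasFDerivAt
  -- the function in the statement
  set g : ℝ → ℝ := fun t => z + a * Real.sin t + b * (1 - Real.cos t) - F (c t) with hgdef
  have hg : ContDiffAt ℝ 2 g 0 := by
    apply ContDiffAt.sub
    · exact ((contDiff_const.add (contDiff_const.mul Real.contDiff_sin)).add
        (contDiff_const.mul (contDiff_const.sub Real.contDiff_cos))).of_le le_top |>.contDiffAt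
    · have hf' : ContDiffAt ℝ 2 F (c 0) := by rw [hc0]; exact hf
      exact hf'.comp 0 (hcC.contDiffAt (x := (0:ℝ)))
  -- eventual differentiability of F along c
  have hevF : ∀ᶠ t in nhds (0:ℝ), ContDiffAt ℝ 2 F (c t) := by
    have hct : Tendsto c (nhds 0) (nhds (x, y)) := by
      rw [← hc0]
      exact hcC.continuous.continuousAt
    exact hct.eventually (hf.eventually (by simp))
  have hPd : ∀ t : ℝ, HasDerivAt (fun t => z + a * Real.sin t + b * (1 - Real.cos t))
      (a * Real.cos t + b * Real.sin t) t := by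
    intro t
    have h1 : HasDerivAt (fun t : ℝ => z + a * Real.sin t + b * (1 - Real.cos t))
        (0 + a * Real.cos t + b * (0 - -Real.sin t)) t :=
      ((hasDerivAt_const t z).add ((Real.hasDerivAt_sin t).const_mul a)).add
        (((hasDerivAt_const t (1:ℝ)).sub (Real.hasDerivAt_cos t)).const_mul b)
    convert h1 using 1
    ring
  have hgd : ∀ᶠ t in nhds (0:ℝ), HasDerivAt g
      (a * Real.cos t + b * Real.sin t - fderiv ℝ F (c t) (c' t)) t := by
    filter_upwards [hevF] with t ht
    exact (hPd t).sub
      ((ht.differentiableAt (by norm_num)).hasFDerivAt.comp_hasDerivAt t (hc' t))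
  have hderiv_g0 : deriv g 0 = a - L (v, -u) := by
    have := (hgd.self_of_nhds).deriv
    rw [this, hc0, hc'0]
    simp [hLdef]
  have hderivfn : deriv g =ᶠ[nhds (0:ℝ)]
      fun t => a * Real.cos t + b * Real.sin t - fderiv ℝ F (c t) (c' t) := by
    filter_upwards [hgd] with t ht
    exact ht.deriv
  have hderiv2_g0 : deriv (deriv g) 0 = b - (Q (v, -u) (v, -u) + L (u, v)) := by
    rw [hderivfn.deriv_eq]
    have hA : HasDerivAt (fun t => fderiv ℝ F (c t)) (Q (v, -u)) 0 := by
      have hQ' : HasFDerivAt (fderiv ℝ F) Q (c 0) := by rw [hc0]; exact hQ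
      have := hQ'.comp_hasDerivAt 0 (hc' 0)
      rwa [hc'0] at this
    have hB : HasDerivAt (fun t => (fderiv ℝ F (c t)) (c' t))
        (Q (v, -u) (c' 0) + (fderiv ℝ F (c 0)) ((u, v) : ℝ × ℝ)) 0 :=
      hA.clm_apply hc''
    rw [hc0, hc'0] at hB
    have hP2 : HasDerivAt (fun t => a * Real.cos t + b * Real.sin t)
        (a * -Real.sin 0 + b * Real.cos 0) 0 :=
      ((Real.hasDerivAt_cos 0).const_mul a).add ((Real.hasDerivAt_sin 0).const_mul b)
    have := (hP2.sub hB).deriv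
    refine Eq.trans this ?_
    simp [hLdef]
  -- identification of first partial derivatives with fderiv applications
  have hpdx_ev : ∀ p : ℝ × ℝ, ContDiffAt ℝ 2 F p → pdx f p.1 p.2 = fderiv ℝ F p (1, 0) := by
    intro p hp
    have h1 : HasDerivAt (fun s : ℝ => ((s, p.2) : ℝ × ℝ)) ((1, 0) : ℝ × ℝ) p.1 :=
      (hasDerivAt_id p.1).prodMk (hasDerivAt_const p.1 p.2)
    have h2 := (hp.differentiableAt (by norm_num)).hasFDerivAt.comp_hasDerivAt p.1 h1
    exact h2.deriv
  have hpdy_ev : ∀ p : ℝ × ℝ, ContDiffAt ℝ 2 F p → pdy f p.1 p.2 = fderiv ℝ F p (0, 1) := by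
    intro p hp
    have h1 : HasDerivAt (fun s : ℝ => ((p.1, s) : ℝ × ℝ)) ((0, 1) : ℝ × ℝ) p.2 :=
      (hasDerivAt_const p.2 p.1).prodMk (hasDerivAt_id p.2)
    have h2 := (hp.differentiableAt (by norm_num)).hasFDerivAt.comp_hasDerivAt p.2 h1
    exact h2.deriv
  have hpdx0 : pdx f x y = L (1, 0) := hpdx_ev (x, y) hf
  have hpdy0 : pdy f x y = L (0, 1) := hpdy_ev (x, y) hf
  -- second partials
  have hlinex : Tendsto (fun s : ℝ => ((s, y) : ℝ × ℝ)) (nhds x) (nhds (x, y)) :=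
    (continuous_id.prodMk continuous_const).tendsto' x (x, y) rfl
  have hliney : Tendsto (fun s : ℝ => ((x, s) : ℝ × ℝ)) (nhds y) (nhds (x, y)) :=
    (continuous_const.prodMk continuous_id).tendsto' y (x, y) rfl
  have hevnhds : ∀ᶠ p in nhds ((x, y) : ℝ × ℝ), ContDiffAt ℝ 2 F p := hf.eventually (by simp)
  have hpdxx : pdx (pdx f) x y = Q (1, 0) (1, 0) := by
    have hev2 : (fun s => pdx f s y) =ᶠ[nhds x] fun s => fderiv ℝ F (s, y) (1, 0) := by
      filter_upwards [hlinex.eventually hevnhds] with s hs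
      exact hpdx_ev (s, y) hs
    have hc1 : HasDerivAt (fun s : ℝ => ((s, y) : ℝ × ℝ)) ((1, 0) : ℝ × ℝ) x :=
      (hasDerivAt_id x).prodMk (hasDerivAt_const x y)
    have hQA : HasDerivAt (fun s : ℝ => fderiv ℝ F (s, y)) (Q (1, 0)) x :=
      hQ.comp_hasDerivAt x hc1
    have h3 := (hQA.clm_apply (hasDerivAt_const x ((1, 0) : ℝ × ℝ))).deriv
    show deriv (fun s => pdx f s y) x = _
    rw [hev2.deriv_eq, h3]
    simp
  have hpdxy : pdy (pdx f) x y = Q (0, 1) (1, 0) := by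
    have hev2 : (fun s => pdx f x s) =ᶠ[nhds y] fun s => fderiv ℝ F (x, s) (1, 0) := by
      filter_upwards [hliney.eventually hevnhds] with s hs
      exact hpdx_ev (x, s) hs
    have hc1 : HasDerivAt (fun s : ℝ => ((x, s) : ℝ × ℝ)) ((0, 1) : ℝ × ℝ) y :=
      (hasDerivAt_const y x).prodMk (hasDerivAt_id y)
    have hQA : HasDerivAt (fun s : ℝ => fderiv ℝ F (x, s)) (Q (0, 1)) y :=
      hQ.comp_hasDerivAt y hc1
    have h3 := (hQA.clm_apply (hasDerivAt_const y ((1, 0) : ℝ × ℝ))).deriv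
    show deriv (fun s => pdx f x s) y = _
    rw [hev2.deriv_eq, h3]
    simp
  have hpdyy : pdy (pdy f) x y = Q (0, 1) (0, 1) := by
    have hev2 : (fun s => pdy f x s) =ᶠ[nhds y] fun s => fderiv ℝ F (x, s) (0, 1) := by
      filter_upwards [hliney.eventually hevnhds] with s hs
      exact hpdy_ev (x, s) hs
    have hc1 : HasDerivAt (fun s : ℝ => ((x, s) : ℝ × ℝ)) ((0, 1) : ℝ × ℝ) y :=
      (hasDerivAt_const y x).prodMk (hasDerivAt_id y)
    have hQA : HasDerivAt (fun s : ℝ => fderiv ℝ F (x, s)) (Q (0, 1)) y :=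
      hQ.comp_hasDerivAt y hc1
    have h3 := (hQA.clm_apply (hasDerivAt_const y ((0, 1) : ℝ × ℝ))).deriv
    show deriv (fun s => pdy f x s) y = _
    rw [hev2.deriv_eq, h3]
    simp
  have hsym : Q (1, 0) (0, 1) = Q (0, 1) (1, 0) :=
    hf.isSymmSndFDerivAt (by simp) (1, 0) (0, 1)
  -- bilinearity expansions
  have hT1 : ∀ (T : ℝ × ℝ →L[ℝ] ℝ) (p q : ℝ), T (p, q) = p * T (1, 0) + q * T (0, 1) := by
    intro T p q
    have h : ((p, q) : ℝ × ℝ) = p • ((1, 0) : ℝ × ℝ) + q • ((0, 1) : ℝ × ℝ) := by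
      simp [Prod.ext_iff]
    rw [h, map_add, map_smul, map_smul, smul_eq_mul, smul_eq_mul]
  have hT2 : ∀ p q r s : ℝ, Q (p, q) (r, s)
      = p * r * Q (1, 0) (1, 0) + p * s * Q (1, 0) (0, 1)
        + q * r * Q (0, 1) (1, 0) + q * s * Q (0, 1) (0, 1) := by
    intro p q r s
    have h : ((p, q) : ℝ × ℝ) = p • ((1, 0) : ℝ × ℝ) + q • ((0, 1) : ℝ × ℝ) := by
      simp [Prod.ext_iff]
    rw [h, map_add, map_smul, map_smul]
    simp only [ContinuousLinearMap.add_apply, ContinuousLinearMap.coe_smul',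
      Pi.smul_apply, smul_eq_mul]
    rw [hT1 (Q (1, 0)) r s, hT1 (Q (0, 1)) r s]
    ring
  -- final assembly
  have e0 : g 0 = z - f x y := by
    simp [hgdef, hcdef, hF]
  have eA : L (v, -u) = pdx f x y * v - pdy f x y * u := by
    rw [hT1 L v (-u), hpdx0, hpdy0]; ring
  have eB : Q (v, -u) (v, -u) + L (u, v)
      = pdx f x y * u + pdy f x y * v
          + pdx (pdx f) x y * v ^ 2 - 2 * pdy (pdx f) x y * u * v
          + pdy (pdy f) x y * u ^ 2 := by
    rw [hT2 v (-u) v (-u), hT1 L u v, hsym, hpdx0, hpdy0, hpdxx, hpdxy, hpdyy]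
    ring
  refine Iff.trans (key_iff g hg) ?_
  rw [e0, hderiv_g0, hderiv2_g0, eA, eB, sub_eq_zero, sub_eq_zero, sub_eq_zero]
end

section
/- Let f be C^3 near (x,y) and suppose the curve t ↦ (x + v sin t + u(1-cos t), y - u sin t + v(1-cos t), z + a sin t + b(1-cos t)) has contact of order 2 with the graph of f at t = 0 (so z, a, b satisfy the osculation conditions). Then it has contact of order 3 if and only if f_xxx v³ - 3 f_xxy v² u + 3 f_xyy v u² - f_yyy u³ + 3(f_xx - f_yy) u v + 3 f_xy (v² - u²) = 0 at (x,y). -/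
open Real Set Filter

noncomputable def DX (G : ℝ × ℝ → ℝ) : ℝ × ℝ → ℝ := fun p => fderiv ℝ G p (1, 0)
noncomputable def DY (G : ℝ × ℝ → ℝ) : ℝ × ℝ → ℝ := fun p => fderiv ℝ G p (0, 1)

lemma pdx_eq' (g : ℝ → ℝ → ℝ) (x y : ℝ)
    (hG : DifferentiableAt ℝ (fun q : ℝ × ℝ => g q.1 q.2) (x, y)) :
    pdx g x y = DX (fun q : ℝ × ℝ => g q.1 q.2) (x, y) := by
  have h1 : HasDerivAt (fun s : ℝ => (s, y)) ((1 : ℝ), (0 : ℝ)) x :=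
    (hasDerivAt_id x).prodMk (hasDerivAt_const x y)
  exact (hG.hasFDerivAt.comp_hasDerivAt x h1).deriv

lemma pdy_eq' (g : ℝ → ℝ → ℝ) (x y : ℝ)
    (hG : DifferentiableAt ℝ (fun q : ℝ × ℝ => g q.1 q.2) (x, y)) :
    pdy g x y = DY (fun q : ℝ × ℝ => g q.1 q.2) (x, y) := by
  have h1 : HasDerivAt (fun s : ℝ => (x, s)) ((0 : ℝ), (1 : ℝ)) y :=
    (hasDerivAt_const y x).prodMk (hasDerivAt_id y)
  exact (hG.hasFDerivAt.comp_hasDerivAt y h1).deriv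

lemma pdx_congr (g : ℝ → ℝ → ℝ) (G : ℝ × ℝ → ℝ) (U : Set (ℝ × ℝ)) (hU : IsOpen U)
    (heq : ∀ q ∈ U, g q.1 q.2 = G q) {q : ℝ × ℝ} (hq : q ∈ U)
    (hG : DifferentiableAt ℝ G q) :
    pdx g q.1 q.2 = DX G q := by
  have hcont : ContinuousAt (fun s : ℝ => (s, q.2)) q.1 :=
    (continuous_id.prodMk continuous_const).continuousAt
  have hev : (fun s => g s q.2) =ᶠ[nhds q.1] (fun s => G (s, q.2)) := by
    filter_upwards [hcont.preimage_mem_nhds (hU.mem_nhds hq)] with s hs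
    exact heq _ hs
  have h2 : pdx g q.1 q.2 = deriv (fun s => G (s, q.2)) q.1 := hev.deriv_eq
  rw [h2]
  exact pdx_eq' (fun a b => G (a, b)) q.1 q.2 hG

lemma pdy_congr (g : ℝ → ℝ → ℝ) (G : ℝ × ℝ → ℝ) (U : Set (ℝ × ℝ)) (hU : IsOpen U)
    (heq : ∀ q ∈ U, g q.1 q.2 = G q) {q : ℝ × ℝ} (hq : q ∈ U)
    (hG : DifferentiableAt ℝ G q) :
    pdy g q.1 q.2 = DY G q := by
  have hcont : ContinuousAt (fun s : ℝ => (q.1, s)) q.2 :=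
    (continuous_const.prodMk continuous_id).continuousAt
  have hev : (fun s => g q.1 s) =ᶠ[nhds q.2] (fun s => G (q.1, s)) := by
    filter_upwards [hcont.preimage_mem_nhds (hU.mem_nhds hq)] with s hs
    exact heq _ hs
  have h2 : pdy g q.1 q.2 = deriv (fun s => G (q.1, s)) q.2 := hev.deriv_eq
  rw [h2]
  exact pdy_eq' (fun a b => G (a, b)) q.1 q.2 hG

lemma DX_contDiffAt {n : ℕ} {G : ℝ × ℝ → ℝ} {p : ℝ × ℝ}
    (hG : ContDiffAt ℝ (n + 1) G p) : ContDiffAt ℝ n (DX G) p := by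
  have := (hG.fderiv_right (m := n) (by norm_cast)).clm_apply
    (contDiffAt_const (c := ((1 : ℝ), (0 : ℝ))))
  exact this

lemma DY_contDiffAt {n : ℕ} {G : ℝ × ℝ → ℝ} {p : ℝ × ℝ}
    (hG : ContDiffAt ℝ (n + 1) G p) : ContDiffAt ℝ n (DY G) p := by
  have := (hG.fderiv_right (m := n) (by norm_cast)).clm_apply
    (contDiffAt_const (c := ((0 : ℝ), (1 : ℝ))))
  exact this

lemma DX_DY_symm {G : ℝ × ℝ → ℝ} {p : ℝ × ℝ} (hG : ContDiffAt ℝ 2 G p) :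
    DX (DY G) p = DY (DX G) p := by
  have hd : DifferentiableAt ℝ (fderiv ℝ G) p :=
    (hG.fderiv_right (m := 1) (by norm_num)).differentiableAt (by norm_num)
  have key : ∀ w : ℝ × ℝ, HasFDerivAt (fun q => fderiv ℝ G q w)
      ((ContinuousLinearMap.apply ℝ ℝ w).comp (fderiv ℝ (fderiv ℝ G) p)) p := fun w =>
    (ContinuousLinearMap.apply ℝ ℝ w).hasFDerivAt.comp p hd.hasFDerivAt
  have hsym := hG.isSymmSndFDerivAt (by simp)
  show fderiv ℝ (fun q => fderiv ℝ G q (0, 1)) p (1, 0)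
      = fderiv ℝ (fun q => fderiv ℝ G q (1, 0)) p (0, 1)
  rw [(key (0, 1)).fderiv, (key (1, 0)).fderiv]
  simpa using hsym (1, 0) (0, 1)

lemma curve_hasDerivAt {G : ℝ × ℝ → ℝ} {c : ℝ → ℝ × ℝ} {d : ℝ × ℝ} {t : ℝ}
    (hc : HasDerivAt c d t) (hG : DifferentiableAt ℝ G (c t)) :
    HasDerivAt (fun s => G (c s)) (DX G (c t) * d.1 + DY G (c t) * d.2) t := by
  have h := hG.hasFDerivAt.comp_hasDerivAt t hc
  refine h.congr_deriv (Eq.symm ?_)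
  have hd : d = d.1 • ((1 : ℝ), (0 : ℝ)) + d.2 • ((0 : ℝ), (1 : ℝ)) := by
    apply Prod.ext <;> simp
  conv_rhs => rw [hd]
  rw [map_add, map_smul, map_smul, smul_eq_mul, smul_eq_mul]
  simp only [DX, DY]; ring

lemma cube_lim (h h1 h2 : ℝ → ℝ) (L : ℝ)
    (E1 : ∀ᶠ t in nhds (0 : ℝ), HasDerivAt h (h1 t) t)
    (E2 : ∀ᶠ t in nhds (0 : ℝ), HasDerivAt h1 (h2 t) t)
    (E3 : HasDerivAt h2 L 0)
    (h0 : h 0 = 0) (h10 : h1 0 = 0) (h20 : h2 0 = 0) :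
    Tendsto (fun t => h t / t ^ 3) (nhdsWithin 0 {(0 : ℝ)}ᶜ) (nhds (L / 6)) := by
  have st3 : Tendsto (fun t => h2 t / (6 * t)) (nhdsWithin 0 {(0 : ℝ)}ᶜ) (nhds (L / 6)) := by
    have hs := hasDerivAt_iff_tendsto_slope.mp E3
    have := hs.div_const 6
    refine this.congr' ?_
    filter_upwards with t
    simp [slope_def_field, h20]
    ring
  have st2 : Tendsto (fun t => h1 t / (3 * t ^ 2)) (nhdsWithin 0 {(0 : ℝ)}ᶜ) (nhds (L / 6)) := by
    apply HasDerivAt.lhopital_zero_nhdsNE (f' := h2) (g' := fun t => 6 * t)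
    · exact eventually_nhdsWithin_of_eventually_nhds E2
    · filter_upwards with t
      have := ((hasDerivAt_pow 2 t).const_mul 3)
      exact this.congr_deriv (by push_cast; ring)
    · rw [eventually_nhdsWithin_iff]
      filter_upwards with t ht
      simp only [mem_compl_iff, mem_singleton_iff] at ht
      positivity
    · have hc : ContinuousAt h1 0 := (E2.self_of_nhds).differentiableAt.continuousAt
      have : Tendsto h1 (nhds (0 : ℝ)) (nhds 0) := by simpa [h10] using hc.tendsto
      exact this.mono_left nhdsWithin_le_nhds
    · have : Tendsto (fun t : ℝ => 3 * t ^ 2) (nhds 0) (nhds 0) := by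
        have : Continuous (fun t : ℝ => 3 * t ^ 2) := by continuity
        simpa using this.tendsto 0
      exact this.mono_left nhdsWithin_le_nhds
    · exact st3
  apply HasDerivAt.lhopital_zero_nhdsNE (f' := h1) (g' := fun t => 3 * t ^ 2)
  · exact eventually_nhdsWithin_of_eventually_nhds E1
  · filter_upwards with t
    have := (hasDerivAt_pow 3 t)
    exact this.congr_deriv (by push_cast; ring)
  · rw [eventually_nhdsWithin_iff]
    filter_upwards with t ht
    simp only [mem_compl_iff, mem_singleton_iff] at ht
    positivity
  · have hc : ContinuousAt h 0 := (E1.self_of_nhds).differentiableAt.continuousAt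
    have : Tendsto h (nhds (0 : ℝ)) (nhds 0) := by simpa [h0] using hc.tendsto
    exact this.mono_left nhdsWithin_le_nhds
  · have : Tendsto (fun t : ℝ => t ^ 3) (nhds 0) (nhds 0) := by
      simpa using (continuous_pow 3).tendsto (0 : ℝ)
    exact this.mono_left nhdsWithin_le_nhds
  · exact st2

/-- given the osculation (order 2 contact) conditions, the conic has third
order contact with the graph of `f` at `t = 0` iff the third order equation holds. -/
theorem stmt_9 (f : ℝ → ℝ → ℝ) (x y z a b u v : ℝ)
    (hf : ContDiffAt ℝ 3 (fun p : ℝ × ℝ => f p.1 p.2) (x, y))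
    (huv : (u, v) ≠ ((0 : ℝ), (0 : ℝ)))
    (hz : z = f x y)
    (ha : a = pdx f x y * v - pdy f x y * u)
    (hb : b = pdx f x y * u + pdy f x y * v
        + pdx (pdx f) x y * v ^ 2 - 2 * pdy (pdx f) x y * u * v + pdy (pdy f) x y * u ^ 2) :
    Tendsto (fun t : ℝ =>
        (z + a * Real.sin t + b * (1 - Real.cos t)
          - f (x + v * Real.sin t + u * (1 - Real.cos t))
              (y - u * Real.sin t + v * (1 - Real.cos t))) / t ^ 3)
      (nhdsWithin 0 {(0 : ℝ)}ᶜ) (nhds 0)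
    ↔ pdx (pdx (pdx f)) x y * v ^ 3 - 3 * pdy (pdx (pdx f)) x y * v ^ 2 * u
        + 3 * pdy (pdy (pdx f)) x y * v * u ^ 2 - pdy (pdy (pdy f)) x y * u ^ 3
        + 3 * (pdx (pdx f) x y - pdy (pdy f) x y) * u * v
        + 3 * pdy (pdx f) x y * (v ^ 2 - u ^ 2) = 0 := by
  clear huv
  set F : ℝ × ℝ → ℝ := fun p => f p.1 p.2 with hFdef
  -- obtain an open set on which F is C³
  obtain ⟨U, hUopen, hp0, hFU'⟩ :=
    ContDiffWithinAt.contDiffOn' (m := 3) le_rfl (by simp) hf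
  rw [insert_eq_of_mem (mem_univ _), univ_inter] at hFU'
  have hCA : ∀ q ∈ U, ContDiffAt ℝ 3 F q := fun q hq =>
    (hFU' q hq).contDiffAt (hUopen.mem_nhds hq)
  have hdF : ∀ q ∈ U, DifferentiableAt ℝ F q := fun q hq =>
    (hCA q hq).differentiableAt (by norm_num)
  have hA1c : ∀ q ∈ U, ContDiffAt ℝ 2 (DX F) q := fun q hq =>
    DX_contDiffAt (n := 2) (by exact_mod_cast hCA q hq)
  have hA2c : ∀ q ∈ U, ContDiffAt ℝ 2 (DY F) q := fun q hq =>
    DY_contDiffAt (n := 2) (by exact_mod_cast hCA q hq)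
  have hdA1 : ∀ q ∈ U, DifferentiableAt ℝ (DX F) q := fun q hq =>
    (hA1c q hq).differentiableAt (by norm_num)
  have hdA2 : ∀ q ∈ U, DifferentiableAt ℝ (DY F) q := fun q hq =>
    (hA2c q hq).differentiableAt (by norm_num)
  have hB11c : ∀ q ∈ U, ContDiffAt ℝ 1 (DX (DX F)) q := fun q hq =>
    DX_contDiffAt (n := 1) (by exact_mod_cast hA1c q hq)
  have hB12c : ∀ q ∈ U, ContDiffAt ℝ 1 (DY (DX F)) q := fun q hq =>
    DY_contDiffAt (n := 1) (by exact_mod_cast hA1c q hq)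
  have hB21c : ∀ q ∈ U, ContDiffAt ℝ 1 (DX (DY F)) q := fun q hq =>
    DX_contDiffAt (n := 1) (by exact_mod_cast hA2c q hq)
  have hB22c : ∀ q ∈ U, ContDiffAt ℝ 1 (DY (DY F)) q := fun q hq =>
    DY_contDiffAt (n := 1) (by exact_mod_cast hA2c q hq)
  have hdB11 : ∀ q ∈ U, DifferentiableAt ℝ (DX (DX F)) q := fun q hq =>
    (hB11c q hq).differentiableAt (by norm_num)
  have hdB12 : ∀ q ∈ U, DifferentiableAt ℝ (DY (DX F)) q := fun q hq =>
    (hB12c q hq).differentiableAt (by norm_num)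
  have hdB21 : ∀ q ∈ U, DifferentiableAt ℝ (DX (DY F)) q := fun q hq =>
    (hB21c q hq).differentiableAt (by norm_num)
  have hdB22 : ∀ q ∈ U, DifferentiableAt ℝ (DY (DY F)) q := fun q hq =>
    (hB22c q hq).differentiableAt (by norm_num)
  -- translation of pdx/pdy iterates into DX/DY iterates
  have t1x : ∀ q ∈ U, pdx f q.1 q.2 = DX F q := fun q hq =>
    pdx_congr f F U hUopen (fun _ _ => rfl) hq (hdF q hq)
  have t1y : ∀ q ∈ U, pdy f q.1 q.2 = DY F q := fun q hq =>
    pdy_congr f F U hUopen (fun _ _ => rfl) hq (hdF q hq)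
  have t2xx : ∀ q ∈ U, pdx (pdx f) q.1 q.2 = DX (DX F) q := fun q hq =>
    pdx_congr (pdx f) (DX F) U hUopen t1x hq (hdA1 q hq)
  have t2yx : ∀ q ∈ U, pdy (pdx f) q.1 q.2 = DY (DX F) q := fun q hq =>
    pdy_congr (pdx f) (DX F) U hUopen t1x hq (hdA1 q hq)
  have t2yy : ∀ q ∈ U, pdy (pdy f) q.1 q.2 = DY (DY F) q := fun q hq =>
    pdy_congr (pdy f) (DY F) U hUopen t1y hq (hdA2 q hq)
  have t3xxx : pdx (pdx (pdx f)) x y = DX (DX (DX F)) (x, y) :=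
    pdx_congr (pdx (pdx f)) (DX (DX F)) U hUopen t2xx hp0 (hdB11 _ hp0)
  have t3yxx : pdy (pdx (pdx f)) x y = DY (DX (DX F)) (x, y) :=
    pdy_congr (pdx (pdx f)) (DX (DX F)) U hUopen t2xx hp0 (hdB11 _ hp0)
  have t3yyx : pdy (pdy (pdx f)) x y = DY (DY (DX F)) (x, y) :=
    pdy_congr (pdy (pdx f)) (DY (DX F)) U hUopen t2yx hp0 (hdB12 _ hp0)
  have t3yyy : pdy (pdy (pdy f)) x y = DY (DY (DY F)) (x, y) :=
    pdy_congr (pdy (pdy f)) (DY (DY F)) U hUopen t2yy hp0 (hdB22 _ hp0)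
  -- symmetry facts
  have symF : ∀ q ∈ U, DX (DY F) q = DY (DX F) q := fun q hq =>
    DX_DY_symm ((hCA q hq).of_le (by norm_num))
  have hevsym : DX (DY F) =ᶠ[nhds ((x, y) : ℝ × ℝ)] DY (DX F) := by
    filter_upwards [hUopen.mem_nhds hp0] with q hq using symF q hq
  have cQ : DX (DY F) (x, y) = DY (DX F) (x, y) := symF _ hp0
  have hfd_eq : fderiv ℝ (DX (DY F)) (x, y) = fderiv ℝ (DY (DX F)) (x, y) :=
    hevsym.fderiv_eq
  have c1 : DX (DX (DY F)) (x, y) = DY (DX (DX F)) (x, y) := by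
    have h1 : DX (DX (DY F)) (x, y) = DX (DY (DX F)) (x, y) := by
      simp only [DX]; rw [hfd_eq]
    rw [h1]
    exact DX_DY_symm (hA1c _ hp0)
  have c2 : DY (DX (DY F)) (x, y) = DY (DY (DX F)) (x, y) := by
    simp only [DY]; rw [hfd_eq]
  have c3 : DX (DY (DY F)) (x, y) = DY (DY (DX F)) (x, y) := by
    rw [DX_DY_symm (hA2c _ hp0)]
    exact c2
  have c4 : DX (DY (DX F)) (x, y) = DY (DX (DX F)) (x, y) :=
    DX_DY_symm (hA1c _ hp0)
  -- the curve and its derivatives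
  set X : ℝ → ℝ := fun t => x + v * Real.sin t + u * (1 - Real.cos t) with hXdef
  set Y : ℝ → ℝ := fun t => y - u * Real.sin t + v * (1 - Real.cos t) with hYdef
  set c : ℝ → ℝ × ℝ := fun t => (X t, Y t) with hcdef
  set X1 : ℝ → ℝ := fun t => v * Real.cos t + u * Real.sin t with hX1def
  set Y1 : ℝ → ℝ := fun t => v * Real.sin t - u * Real.cos t with hY1def
  set X2 : ℝ → ℝ := fun t => u * Real.cos t - v * Real.sin t with hX2def
  set Y2 : ℝ → ℝ := fun t => u * Real.sin t + v * Real.cos t with hY2def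
  have hXd : ∀ t, HasDerivAt X (X1 t) t := by
    intro t
    have h := (((Real.hasDerivAt_sin t).const_mul v).const_add x).add
      (((Real.hasDerivAt_cos t).const_sub 1).const_mul u)
    rw [hXdef, hX1def]
    refine h.congr_deriv ?_
    ring
  have hYd : ∀ t, HasDerivAt Y (Y1 t) t := by
    intro t
    have h := (((Real.hasDerivAt_sin t).const_mul u).const_sub y).add
      (((Real.hasDerivAt_cos t).const_sub 1).const_mul v)
    rw [hYdef, hY1def]
    refine h.congr_deriv ?_
    ring
  have hX1d : ∀ t, HasDerivAt X1 (X2 t) t := by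
    intro t
    have h := ((Real.hasDerivAt_cos t).const_mul v).add
      ((Real.hasDerivAt_sin t).const_mul u)
    rw [hX1def, hX2def]
    refine h.congr_deriv ?_
    ring
  have hY1d : ∀ t, HasDerivAt Y1 (Y2 t) t := by
    intro t
    have h := ((Real.hasDerivAt_sin t).const_mul v).sub
      ((Real.hasDerivAt_cos t).const_mul u)
    rw [hY1def, hY2def]
    refine h.congr_deriv ?_
    ring
  have hX2d : ∀ t, HasDerivAt X2 (-(u * Real.sin t) - v * Real.cos t) t := by
    intro t
    have h := ((Real.hasDerivAt_cos t).const_mul u).sub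
      ((Real.hasDerivAt_sin t).const_mul v)
    rw [hX2def]
    refine h.congr_deriv ?_
    ring
  have hY2d : ∀ t, HasDerivAt Y2 (u * Real.cos t - v * Real.sin t) t := by
    intro t
    have h := ((Real.hasDerivAt_sin t).const_mul u).add
      ((Real.hasDerivAt_cos t).const_mul v)
    rw [hY2def]
    refine h.congr_deriv ?_
    ring
  have hcurve : ∀ t, HasDerivAt c (X1 t, Y1 t) t := fun t => (hXd t).prodMk (hYd t)
  have hc0 : c 0 = ((x, y) : ℝ × ℝ) := by
    rw [hcdef, hXdef, hYdef]; simp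
  have hU0 : ∀ᶠ t in nhds (0 : ℝ), c t ∈ U := by
    have hcc : ContinuousAt c 0 := (hcurve 0).continuousAt
    have := hcc.preimage_mem_nhds (by rw [hc0]; exact hUopen.mem_nhds hp0)
    filter_upwards [this] with t ht using ht
  -- the three functions
  set h : ℝ → ℝ := fun t => z + a * Real.sin t + b * (1 - Real.cos t) - F (c t) with hhdef
  set g1 : ℝ → ℝ := fun t => a * Real.cos t + b * Real.sin t
      - (DX F (c t) * X1 t + DY F (c t) * Y1 t) with hg1def
  set g2 : ℝ → ℝ := fun t => a * -Real.sin t + b * Real.cos t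
      - ((DX (DX F) (c t) * X1 t + DY (DX F) (c t) * Y1 t) * X1 t + DX F (c t) * X2 t
        + ((DX (DY F) (c t) * X1 t + DY (DY F) (c t) * Y1 t) * Y1 t + DY F (c t) * Y2 t))
      with hg2def
  have E1 : ∀ᶠ t in nhds (0 : ℝ), HasDerivAt h (g1 t) t := by
    filter_upwards [hU0] with t ht
    have hFt : HasDerivAt (fun s => F (c s)) (DX F (c t) * X1 t + DY F (c t) * Y1 t) t :=
      curve_hasDerivAt (hcurve t) (hdF _ ht)
    have htrig : HasDerivAt (fun s => z + a * Real.sin s + b * (1 - Real.cos s))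
        (a * Real.cos t + b * Real.sin t) t := by
      have hh := (((Real.hasDerivAt_sin t).const_mul a).const_add z).add
        (((Real.hasDerivAt_cos t).const_sub 1).const_mul b)
      refine hh.congr_deriv ?_
      ring
    rw [hhdef, hg1def]
    exact htrig.sub hFt
  have E2 : ∀ᶠ t in nhds (0 : ℝ), HasDerivAt g1 (g2 t) t := by
    filter_upwards [hU0] with t ht
    have p1 : HasDerivAt (fun s => DX F (c s))
        (DX (DX F) (c t) * X1 t + DY (DX F) (c t) * Y1 t) t :=
      curve_hasDerivAt (hcurve t) (hdA1 _ ht)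
    have p2 : HasDerivAt (fun s => DY F (c s))
        (DX (DY F) (c t) * X1 t + DY (DY F) (c t) * Y1 t) t :=
      curve_hasDerivAt (hcurve t) (hdA2 _ ht)
    have htrig : HasDerivAt (fun s => a * Real.cos s + b * Real.sin s)
        (a * -Real.sin t + b * Real.cos t) t :=
      ((Real.hasDerivAt_cos t).const_mul a).add ((Real.hasDerivAt_sin t).const_mul b)
    rw [hg1def, hg2def]
    exact htrig.sub ((p1.mul (hX1d t)).add (p2.mul (hY1d t)))
  have hc0U : c 0 ∈ U := by rw [hc0]; exact hp0
  have E3 : HasDerivAt g2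
      (-(pdx (pdx (pdx f)) x y * v ^ 3 - 3 * pdy (pdx (pdx f)) x y * v ^ 2 * u
        + 3 * pdy (pdy (pdx f)) x y * v * u ^ 2 - pdy (pdy (pdy f)) x y * u ^ 3
        + 3 * (pdx (pdx f) x y - pdy (pdy f) x y) * u * v
        + 3 * pdy (pdx f) x y * (v ^ 2 - u ^ 2))) 0 := by
    have q1 : HasDerivAt (fun s => DX (DX F) (c s))
        (DX (DX (DX F)) (c 0) * X1 0 + DY (DX (DX F)) (c 0) * Y1 0) 0 :=
      curve_hasDerivAt (hcurve 0) (hdB11 _ hc0U)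
    have q2 : HasDerivAt (fun s => DY (DX F) (c s))
        (DX (DY (DX F)) (c 0) * X1 0 + DY (DY (DX F)) (c 0) * Y1 0) 0 :=
      curve_hasDerivAt (hcurve 0) (hdB12 _ hc0U)
    have q3 : HasDerivAt (fun s => DX (DY F) (c s))
        (DX (DX (DY F)) (c 0) * X1 0 + DY (DX (DY F)) (c 0) * Y1 0) 0 :=
      curve_hasDerivAt (hcurve 0) (hdB21 _ hc0U)
    have q4 : HasDerivAt (fun s => DY (DY F) (c s))
        (DX (DY (DY F)) (c 0) * X1 0 + DY (DY (DY F)) (c 0) * Y1 0) 0 :=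
      curve_hasDerivAt (hcurve 0) (hdB22 _ hc0U)
    have p1 : HasDerivAt (fun s => DX F (c s))
        (DX (DX F) (c 0) * X1 0 + DY (DX F) (c 0) * Y1 0) 0 :=
      curve_hasDerivAt (hcurve 0) (hdA1 _ hc0U)
    have p2 : HasDerivAt (fun s => DY F (c s))
        (DX (DY F) (c 0) * X1 0 + DY (DY F) (c 0) * Y1 0) 0 :=
      curve_hasDerivAt (hcurve 0) (hdA2 _ hc0U)
    have htrig : HasDerivAt (fun s => a * -Real.sin s + b * Real.cos s)
        (a * -Real.cos 0 + b * -Real.sin 0) 0 :=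
      (((Real.hasDerivAt_sin 0).neg).const_mul a).add ((Real.hasDerivAt_cos 0).const_mul b)
    have b1 := (q1.mul (hX1d 0)).add (q2.mul (hY1d 0))
    have b2 := (q3.mul (hX1d 0)).add (q4.mul (hY1d 0))
    have raw := htrig.sub (((b1.mul (hX1d 0)).add (p1.mul (hX2d 0))).add
      ((b2.mul (hY1d 0)).add (p2.mul (hY2d 0))))
    rw [hg2def]
    refine raw.congr_deriv (Eq.symm ?_)
    rw [t3xxx, t3yxx, t3yyx, t3yyy, t2xx _ hp0, t2yx _ hp0, t2yy _ hp0]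
    rw [ha, t1x _ hp0, t1y _ hp0]
    rw [hc0, hX1def, hY1def, hX2def, hY2def]
    simp only [Real.sin_zero, Real.cos_zero, Pi.add_apply, Pi.mul_apply, hc0]
    rw [c1, c2, c3, c4, cQ]
    ring
  have h0 : h 0 = 0 := by
    rw [hhdef]
    simp only [hc0, Real.sin_zero, Real.cos_zero, hFdef]
    rw [hz]; ring
  have h10 : g1 0 = 0 := by
    rw [hg1def]
    simp only [hc0, hX1def, hY1def, Real.sin_zero, Real.cos_zero]
    rw [ha, t1x _ hp0, t1y _ hp0]
    ring
  have h20 : g2 0 = 0 := by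
    rw [hg2def]
    simp only [hc0, hX1def, hY1def, hX2def, hY2def, Real.sin_zero, Real.cos_zero]
    rw [hb, t1x _ hp0, t1y _ hp0, t2xx _ hp0, t2yx _ hp0, t2yy _ hp0, cQ]
    ring
  have main := cube_lim h g1 g2 _ E1 E2 E3 h0 h10 h20
  have hgoal : (fun t : ℝ =>
      (z + a * Real.sin t + b * (1 - Real.cos t)
        - f (x + v * Real.sin t + u * (1 - Real.cos t))
            (y - u * Real.sin t + v * (1 - Real.cos t))) / t ^ 3)
      = fun t => h t / t ^ 3 := by
    funext t
    rw [hhdef, hFdef, hcdef, hXdef, hYdef]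
  rw [hgoal]
  constructor
  · intro hT
    have huniq := tendsto_nhds_unique hT main
    linarith
  · intro hDD
    have hval : (-(pdx (pdx (pdx f)) x y * v ^ 3 - 3 * pdy (pdx (pdx f)) x y * v ^ 2 * u
        + 3 * pdy (pdy (pdx f)) x y * v * u ^ 2 - pdy (pdy (pdy f)) x y * u ^ 3
        + 3 * (pdx (pdx f) x y - pdy (pdy f) x y) * u * v
        + 3 * pdy (pdx f) x y * (v ^ 2 - u ^ 2))) / 6 = 0 := by
      rw [hDD]; norm_num
    rw [hval] at main
    exact main
end

section
/- For θ ∈ (0, π/2), the circle in the plane z=0 through the point (x,y) with center (x+u,y+v), (u,v) ≠ (0,0), is the stereographic projection (from (0,0,-1)) of a circle of intrinsic (spherical) radius π/2 - θ on the unit sphere, not passing through (0,0,-1), if and only if (x² + y² + 1 + 2xu + 2yv)² = 4 tan²θ (u² + v²). -/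
open Real Set

lemma img_lemma (θ : ℝ) (c : ℝ × ℝ × ℝ)
    (hc : c.1 ^ 2 + c.2.1 ^ 2 + c.2.2 ^ 2 = 1)
    (ht : c.2.2 + Real.sin θ ≠ 0) :
    (fun p : ℝ × ℝ × ℝ => ((p.1 / (p.2.2 + 1), p.2.1 / (p.2.2 + 1)) : ℝ × ℝ)) ''
        {p : ℝ × ℝ × ℝ | p.1 ^ 2 + p.2.1 ^ 2 + p.2.2 ^ 2 = 1 ∧
          p.1 * c.1 + p.2.1 * c.2.1 + p.2.2 * c.2.2 = Real.sin θ}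
      = {q : ℝ × ℝ | (q.1 - c.1 / (c.2.2 + Real.sin θ)) ^ 2
          + (q.2 - c.2.1 / (c.2.2 + Real.sin θ)) ^ 2
          = Real.cos θ ^ 2 / (c.2.2 + Real.sin θ) ^ 2} := by
  have hpy := Real.sin_sq_add_cos_sq θ
  ext q
  constructor
  · rintro ⟨p, ⟨hp, hd⟩, rfl⟩
    have hz : p.2.2 + 1 ≠ 0 := by
      intro h0
      have hz1 : p.2.2 = -1 := by linarith
      have h1 : p.1 = 0 ∧ p.2.1 = 0 := by
        constructor <;> nlinarith [sq_nonneg p.1, sq_nonneg p.2.1]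
      apply ht
      rw [hz1, h1.1, h1.2] at hd
      linarith
    have key : (p.1 * (c.2.2 + Real.sin θ) - (p.2.2 + 1) * c.1) ^ 2
        + (p.2.1 * (c.2.2 + Real.sin θ) - (p.2.2 + 1) * c.2.1) ^ 2
        = Real.cos θ ^ 2 * (p.2.2 + 1) ^ 2 := by
      linear_combination (c.2.2 + Real.sin θ) ^ 2 * hp
        - 2 * (c.2.2 + Real.sin θ) * (p.2.2 + 1) * hd
        + (p.2.2 + 1) ^ 2 * hc - (p.2.2 + 1) ^ 2 * hpy
    simp only [mem_setOf_eq]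
    rw [div_sub_div _ _ hz ht, div_sub_div _ _ hz ht, div_pow, div_pow,
      ← add_div, key]
    rw [mul_pow, mul_comm ((p.2.2 + 1) ^ 2), mul_div_mul_right _ _ (pow_ne_zero 2 hz)]
  · intro hq
    simp only [mem_setOf_eq] at hq
    obtain ⟨X, Y⟩ := q
    simp only at hq ⊢
    have hD : X ^ 2 + Y ^ 2 + 1 ≠ 0 := by positivity
    have key2 : (X * (c.2.2 + Real.sin θ) - c.1) ^ 2
        + (Y * (c.2.2 + Real.sin θ) - c.2.1) ^ 2 = Real.cos θ ^ 2 := by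
      field_simp at hq
      linear_combination hq
    have key4 : 2 * (X * c.1 + Y * c.2.1)
        = (c.2.2 + Real.sin θ) * (X ^ 2 + Y ^ 2) + (Real.sin θ - c.2.2) := by
      apply mul_left_cancel₀ ht
      linear_combination hc - key2 - hpy
    refine ⟨(2 * X / (X ^ 2 + Y ^ 2 + 1), 2 * Y / (X ^ 2 + Y ^ 2 + 1),
      2 / (X ^ 2 + Y ^ 2 + 1) - 1), ⟨?_, ?_⟩, ?_⟩
    · field_simp
      ring
    · simp only
      field_simp
      linear_combination key4
    · simp only
      have hz2 : 2 / (X ^ 2 + Y ^ 2 + 1) - 1 + 1 ≠ 0 := by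
        have h2 : (2:ℝ) / (X ^ 2 + Y ^ 2 + 1) > 0 := by positivity
        intro h; rw [sub_add_cancel] at h; linarith
      field_simp
      rw [sub_add_cancel]
      refine Prod.ext ?_ ?_ <;> dsimp only <;> ring


lemma circles_eq {a b a' b' R R' : ℝ} (hR : 0 < R) (hR' : 0 < R')
    (h : {q : ℝ × ℝ | (q.1 - a) ^ 2 + (q.2 - b) ^ 2 = R}
       = {q : ℝ × ℝ | (q.1 - a') ^ 2 + (q.2 - b') ^ 2 = R'}) :
    a = a' ∧ b = b' ∧ R = R' := by
  have hr : Real.sqrt R ^ 2 = R := Real.sq_sqrt hR.le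
  have hrpos : 0 < Real.sqrt R := Real.sqrt_pos.2 hR
  have h1 := (Set.ext_iff.1 h (a + Real.sqrt R, b)).1 (by simp [hr])
  have h2 := (Set.ext_iff.1 h (a - Real.sqrt R, b)).1 (by simp only [mem_setOf_eq]; ring_nf; nlinarith [hr])
  have h3 := (Set.ext_iff.1 h (a, b + Real.sqrt R)).1 (by simp [hr])
  have h4 := (Set.ext_iff.1 h (a, b - Real.sqrt R)).1 (by simp only [mem_setOf_eq]; ring_nf; nlinarith [hr])
  simp only [mem_setOf_eq] at h1 h2 h3 h4
  have ha : a = a' := by nlinarith [h1, h2, hrpos]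
  have hb : b = b' := by nlinarith [h3, h4, hrpos]
  refine ⟨ha, hb, ?_⟩
  subst ha hb
  nlinarith [h1]

/-- the circle through `(x,y)` with center `(x+u, y+v)` in the plane is
the stereographic projection (from `(0,0,-1)`) of a spherical circle of intrinsic radius
`π/2 - θ` not passing through `(0,0,-1)` iff
`(x² + y² + 1 + 2xu + 2yv)² = 4 tan²θ (u² + v²)`. -/
theorem stmt_12 (θ x y u v : ℝ) (hθ : θ ∈ Ioo 0 (π / 2))
    (huv : (u, v) ≠ ((0 : ℝ), (0 : ℝ))) :
    (∃ c : ℝ × ℝ × ℝ, c.1 ^ 2 + c.2.1 ^ 2 + c.2.2 ^ 2 = 1 ∧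
      -c.2.2 ≠ Real.cos (π / 2 - θ) ∧
      (fun p : ℝ × ℝ × ℝ => ((p.1 / (p.2.2 + 1), p.2.1 / (p.2.2 + 1)) : ℝ × ℝ)) ''
          {p : ℝ × ℝ × ℝ | p.1 ^ 2 + p.2.1 ^ 2 + p.2.2 ^ 2 = 1 ∧
            p.1 * c.1 + p.2.1 * c.2.1 + p.2.2 * c.2.2 = Real.cos (π / 2 - θ)}
        = {q : ℝ × ℝ | (q.1 - (x + u)) ^ 2 + (q.2 - (y + v)) ^ 2 = u ^ 2 + v ^ 2})
    ↔ (x ^ 2 + y ^ 2 + 1 + 2 * x * u + 2 * y * v) ^ 2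
        = 4 * Real.tan θ ^ 2 * (u ^ 2 + v ^ 2) := by
  obtain ⟨hθ1, hθ2⟩ := hθ
  have hpi := Real.pi_pos
  have hsin : 0 < Real.sin θ := Real.sin_pos_of_pos_of_lt_pi hθ1 (by linarith)
  have hcos : 0 < Real.cos θ := Real.cos_pos_of_mem_Ioo ⟨by linarith, hθ2⟩
  have hpy := Real.sin_sq_add_cos_sq θ
  have hρ : 0 < u ^ 2 + v ^ 2 := by
    have h' : ¬(u = 0 ∧ v = 0) := by simpa [Prod.ext_iff] using huv
    rcases not_and_or.1 h' with h | h
    · have := pow_two_pos_of_ne_zero h; positivity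
    · have := pow_two_pos_of_ne_zero h; positivity
  simp only [Real.cos_pi_div_two_sub]
  constructor
  · rintro ⟨c, hc, hne, himg⟩
    have ht : c.2.2 + Real.sin θ ≠ 0 := fun h => hne (by linarith)
    have ht2 : (0:ℝ) < (c.2.2 + Real.sin θ) ^ 2 := pow_two_pos_of_ne_zero ht
    rw [img_lemma θ c hc ht] at himg
    obtain ⟨e1, e2, e3⟩ := circles_eq (div_pos (by positivity) ht2) hρ himg
    have hc1 : c.1 = (x + u) * (c.2.2 + Real.sin θ) := (div_eq_iff ht).1 e1
    have hc2 : c.2.1 = (y + v) * (c.2.2 + Real.sin θ) := (div_eq_iff ht).1 e2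
    have e3' : Real.cos θ ^ 2 = (u ^ 2 + v ^ 2) * (c.2.2 + Real.sin θ) ^ 2 :=
      (div_eq_iff ht2.ne').1 e3
    have htB : (c.2.2 + Real.sin θ) * (x ^ 2 + y ^ 2 + 1 + 2 * x * u + 2 * y * v)
        = 2 * Real.sin θ := by
      apply mul_left_cancel₀ ht
      linear_combination hc - (c.1 + (x + u) * (c.2.2 + Real.sin θ)) * hc1
        - (c.2.1 + (y + v) * (c.2.2 + Real.sin θ)) * hc2 - hpy + e3'
    have hfin : Real.cos θ ^ 2 * (x ^ 2 + y ^ 2 + 1 + 2 * x * u + 2 * y * v) ^ 2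
        = 4 * Real.sin θ ^ 2 * (u ^ 2 + v ^ 2) := by
      linear_combination (x ^ 2 + y ^ 2 + 1 + 2 * x * u + 2 * y * v) ^ 2 * e3'
        + (u ^ 2 + v ^ 2) * ((c.2.2 + Real.sin θ) * (x ^ 2 + y ^ 2 + 1 + 2 * x * u + 2 * y * v)
            + 2 * Real.sin θ) * htB
    rw [Real.tan_eq_sin_div_cos]
    field_simp
    linear_combination hfin
  · intro h
    rw [Real.tan_eq_sin_div_cos] at h
    have h' : Real.cos θ ^ 2 * (x ^ 2 + y ^ 2 + 1 + 2 * x * u + 2 * y * v) ^ 2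
        = 4 * Real.sin θ ^ 2 * (u ^ 2 + v ^ 2) := by
      field_simp at h
      linear_combination h
    have hBne : x ^ 2 + y ^ 2 + 1 + 2 * x * u + 2 * y * v ≠ 0 := by
      intro h0
      rw [h0] at h'
      have h4 : 0 < 4 * Real.sin θ ^ 2 * (u ^ 2 + v ^ 2) := by positivity
      nlinarith
    set B := x ^ 2 + y ^ 2 + 1 + 2 * x * u + 2 * y * v with hB
    have htne : 2 * Real.sin θ / B ≠ 0 := div_ne_zero (by positivity) hBne
    refine ⟨(2 * Real.sin θ / B * (x + u), 2 * Real.sin θ / B * (y + v),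
        2 * Real.sin θ / B - Real.sin θ), ?_, ?_, ?_⟩
    · simp only
      field_simp
      linear_combination (-1 : ℝ) * h' + B ^ 2 * hpy
    · simp only
      intro h0
      exact htne (by linarith)
    · have hc' : (2 * Real.sin θ / B * (x + u)) ^ 2 + (2 * Real.sin θ / B * (y + v)) ^ 2
          + (2 * Real.sin θ / B - Real.sin θ) ^ 2 = 1 := by
        field_simp
        linear_combination (-1 : ℝ) * h' + B ^ 2 * hpy
      have ht' : (2 * Real.sin θ / B - Real.sin θ) + Real.sin θ ≠ 0 := by
        rw [sub_add_cancel]; exact htne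
      rw [img_lemma θ _ hc' ht']
      have hsum : (2 * Real.sin θ / B - Real.sin θ) + Real.sin θ = 2 * Real.sin θ / B := by ring
      have E3 : Real.cos θ ^ 2 / (2 * Real.sin θ / B) ^ 2 = u ^ 2 + v ^ 2 := by
        field_simp
        linear_combination h'
      ext q
      simp only [mem_setOf_eq, hsum]
      rw [mul_div_cancel_left₀ (x + u) htne, mul_div_cancel_left₀ (y + v) htne, E3]
end

section
/- The oriented sphere with center (m₁,m₂,m₃) and radius R (with inwards oriented normals) corresponds in the isotropic model to the graph of z = ((R+m₃)/2)(x²+y²) - m₁x - m₂y + (R-m₃)/2; that is, an oriented plane with unit normal (n₁,n₂,n₃) ≠ (0,0,-1) and equation n₁X + n₂Y + n₃Z + h = 0 is tangent to this sphere with matching orientation if and only if its isotropic image point (x,y,z) = (n₁/(n₃+1), n₂/(n₃+1), h/(n₃+1)) satisfies z = ((R+m₃)/2)(x²+y²) - m₁x - m₂y + (R-m₃)/2. -/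
open Real

/-- an oriented plane `n₁X + n₂Y + n₃Z + h = 0` with unit normal
`n ≠ (0,0,-1)` is tangent with matching orientation to the oriented sphere with center
`(m₁,m₂,m₃)`, radius `R` and inward normals (i.e. `n·m + h = R`) iff its isotropic image
lies on the graph `z = ((R+m₃)/2)(x²+y²) - m₁x - m₂y + (R-m₃)/2`. -/
theorem stmt_13 (m₁ m₂ m₃ R n₁ n₂ n₃ h : ℝ)
    (hn : n₁ ^ 2 + n₂ ^ 2 + n₃ ^ 2 = 1) (hn₃ : n₃ ≠ -1) :
    (n₁ * m₁ + n₂ * m₂ + n₃ * m₃ + h = R)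
    ↔ h / (n₃ + 1)
        = ((R + m₃) / 2) * ((n₁ / (n₃ + 1)) ^ 2 + (n₂ / (n₃ + 1)) ^ 2)
          - m₁ * (n₁ / (n₃ + 1)) - m₂ * (n₂ / (n₃ + 1)) + (R - m₃) / 2 := by
  have h1 : n₃ + 1 ≠ 0 := fun hc => hn₃ (by linarith)
  have h2 : n₁ ^ 2 + n₂ ^ 2 = (1 - n₃) * (1 + n₃) := by nlinarith
  constructor
  · intro H
    field_simp
    linear_combination (2*(n₃+1)) * H - (R+m₃) * h2
  · intro H
    field_simp at H
    have key : 4*(n₃+1)^4 * (n₁*m₁+n₂*m₂+n₃*m₃+h - R) = 0 := by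
      linear_combination 2*(n₃+1)^3 * H + 2*(R+m₃)*(n₃+1)^3 * h2
    have h4 : (4:ℝ)*(n₃+1)^4 ≠ 0 := by positivity
    have := mul_eq_zero.mp key
    rcases this with h' | h'
    · exact absurd h' h4
    · linarith
end

section
/- Suppose the conic t ↦ (x + v sin t + u(1-cos t), y - u sin t + v(1-cos t), z + a sin t + b(1-cos t)), with (u,v) ≠ (0,0), lies on the paraboloid Z = (m₃/2)(X²+Y²) - m₁X - m₂Y - m₃/2 (the isotropic image of the sphere of radius 0 centered at m = (m₁,m₂,m₃)). If x² + y² + 1 + 2ux + 2vy ≠ 0 then m is uniquely determined and equals the formula m = 1/((u²+v²)(x²+y²+1+2ux+2vy)) · ((x²-y²-1)(av+bu) + 2xy(bv-au) - 2(u²+v²)(uz+xz+ay), (y²-x²-1)(bv-au) + 2xy(av+bu) - 2(u²+v²)(vz+yz-ax), 2x(av+bu) + 2y(bv-au) - 2(u²+v²)z). -/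
open Real

/-- if the conic lies on the paraboloid which is the isotropic image of
the sphere of radius `0` centered at `m`, and the denominator does not vanish, then the
vertex `m` is uniquely given by the stated formula. -/
theorem stmt_14 (x y z a b u v m₁ m₂ m₃ : ℝ)
    (huv : (u, v) ≠ ((0 : ℝ), (0 : ℝ)))
    (hden : x ^ 2 + y ^ 2 + 1 + 2 * u * x + 2 * v * y ≠ 0)
    (hon : ∀ t : ℝ,
      z + a * Real.sin t + b * (1 - Real.cos t)
        = (m₃ / 2) * ((x + v * Real.sin t + u * (1 - Real.cos t)) ^ 2
            + (y - u * Real.sin t + v * (1 - Real.cos t)) ^ 2)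
          - m₁ * (x + v * Real.sin t + u * (1 - Real.cos t))
          - m₂ * (y - u * Real.sin t + v * (1 - Real.cos t))
          - m₃ / 2) :
    m₁ = ((x ^ 2 - y ^ 2 - 1) * (a * v + b * u) + 2 * x * y * (b * v - a * u)
          - 2 * (u ^ 2 + v ^ 2) * (u * z + x * z + a * y))
        / ((u ^ 2 + v ^ 2) * (x ^ 2 + y ^ 2 + 1 + 2 * u * x + 2 * v * y)) ∧
    m₂ = ((y ^ 2 - x ^ 2 - 1) * (b * v - a * u) + 2 * x * y * (a * v + b * u)
          - 2 * (u ^ 2 + v ^ 2) * (v * z + y * z - a * x))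
        / ((u ^ 2 + v ^ 2) * (x ^ 2 + y ^ 2 + 1 + 2 * u * x + 2 * v * y)) ∧
    m₃ = (2 * x * (a * v + b * u) + 2 * y * (b * v - a * u)
          - 2 * (u ^ 2 + v ^ 2) * z)
        / ((u ^ 2 + v ^ 2) * (x ^ 2 + y ^ 2 + 1 + 2 * u * x + 2 * v * y)) := by
  have huv' : u ^ 2 + v ^ 2 ≠ 0 := by
    intro h
    apply huv
    have hu : u = 0 := by nlinarith [sq_nonneg u, sq_nonneg v]
    have hv : v = 0 := by nlinarith [sq_nonneg u, sq_nonneg v]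
    simp [hu, hv]
  have hD : (u ^ 2 + v ^ 2) * (x ^ 2 + y ^ 2 + 1 + 2 * u * x + 2 * v * y) ≠ 0 :=
    mul_ne_zero huv' hden
  have h0 := hon 0
  have h1 := hon Real.pi
  have h2 := hon (Real.pi / 2)
  simp [Real.sin_pi, Real.cos_pi, Real.sin_pi_div_two, Real.cos_pi_div_two] at h0 h1 h2
  have hA : b = m₃ * (u * x + v * y + u ^ 2 + v ^ 2) - u * m₁ - v * m₂ := by
    linear_combination (h1 - h0) / 2
  have hC : a = m₃ * (x * v - y * u) - v * m₁ + u * m₂ := by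
    linear_combination h2 - h0 / 2 - h1 / 2
  refine ⟨?_, ?_, ?_⟩
  · rw [eq_div_iff hD]
    linear_combination (-2 * (-(u ^ 2 + v ^ 2) * (x + u))) * h0
      + (-2 * (y * (x * v - y * u) + u * (x ^ 2 + y ^ 2 - 1) / 2)) * hA
      + (-2 * (-y * (u * x + v * y + u ^ 2 + v ^ 2) + v * (x ^ 2 + y ^ 2 - 1) / 2)) * hC
  · rw [eq_div_iff hD]
    linear_combination (-2 * (-(u ^ 2 + v ^ 2) * (y + v))) * h0
      + (-2 * (-x * (x * v - y * u) + v * (x ^ 2 + y ^ 2 - 1) / 2)) * hA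
      + (-2 * (x * (u * x + v * y + u ^ 2 + v ^ 2) - u * (x ^ 2 + y ^ 2 - 1) / 2)) * hC
  · rw [eq_div_iff hD]
    linear_combination (-2 * (-(u ^ 2 + v ^ 2))) * h0
      + (-2 * (u * x + v * y)) * hA
      + (-2 * (x * v - y * u)) * hC
end

section
/- Let Φ be a surface with oriented unit normal (n₁(p), n₂(p), n₃(p)) at the point r(p) = (r₁,r₂,r₃)(p), with n₃ ≠ -1, and suppose the isotropic image of the tangent planes is the graph of a C¹ function f, i.e. f(n₁/(n₃+1), n₂/(n₃+1)) = -(n₁r₁ + n₂r₂ + n₃r₃)/(n₃+1) along Φ. Then the partial derivatives satisfy f_x(n₁/(n₃+1), n₂/(n₃+1)) = n₁r₃/(n₃+1) - r₁ and f_y(n₁/(n₃+1), n₂/(n₃+1)) = n₂r₃/(n₃+1) - r₂, and consequently the contact point is recovered from f by r(x,y) = 1/(x²+y²+1) · ((x²-y²-1)f_x + 2xy f_y - 2x f, (y²-x²-1)f_y + 2xy f_x - 2y f, 2x f_x + 2y f_y - 2f). -/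
open Real Set

private lemma isoAlg1 (n₁ n₂ n₃ r₁ r₂ r₃ a₁ a₂ a₃ b₁ b₂ b₃ Fv u v : ℝ)
    (hu : n₁^2+n₂^2+n₃^2 = 1) (ht : n₃+1 ≠ 0)
    (e1 : a₁*(n₃+1) = n₁*a₃ + (n₃+1)^2*u) (e2 : a₂*(n₃+1) = n₂*a₃ + (n₃+1)^2*v)
    (e3 : n₁*a₁+n₂*a₂+n₃*a₃ = 0) (e4 : n₁*b₁+n₂*b₂+n₃*b₃ = 0)
    (e6 : (n₁*b₁+r₁*a₁+n₂*b₂+r₂*a₂+n₃*b₃+r₃*a₃)*(n₃+1)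
        = (n₁*r₁+n₂*r₂+n₃*r₃)*a₃ - (n₃+1)^2*Fv) :
    Fv = (n₁*u+n₂*v)*r₃/(n₃+1) - r₁*u - r₂*v := by
  have ha₃ : a₃ = -(n₃+1)*(n₁*u+n₂*v) := by
    apply mul_right_cancel₀ ht
    linear_combination (n₃+1)*e3 - n₁*e1 - n₂*e2 - a₃*hu
  subst ha₃
  have h : Fv*(n₃+1) = (n₁*u+n₂*v)*r₃ - (n₃+1)*(r₁*u+r₂*v) := by
    apply mul_right_cancel₀ ht
    linear_combination e6 - (n₃+1)*e4 - r₁*e1 - r₂*e2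
  field_simp
  linear_combination h

private lemma isoRec1 (n₁ n₂ n₃ r₁ r₂ r₃ : ℝ) (hu : n₁^2+n₂^2+n₃^2 = 1) (ht : n₃+1 ≠ 0) :
    r₁ = (((n₁/(n₃+1))^2 - (n₂/(n₃+1))^2 - 1)*(n₁*r₃/(n₃+1) - r₁)
      + 2*(n₁/(n₃+1))*(n₂/(n₃+1))*(n₂*r₃/(n₃+1) - r₂)
      - 2*(n₁/(n₃+1))*(-(n₁*r₁+n₂*r₂+n₃*r₃)/(n₃+1))) / ((n₁/(n₃+1))^2 + (n₂/(n₃+1))^2 + 1) := by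
  have hD : (n₁/(n₃+1))^2 + (n₂/(n₃+1))^2 + 1 ≠ 0 := by positivity
  rw [eq_div_iff hD]
  field_simp
  linear_combination (-n₁*r₃)*hu

private lemma isoRec2 (n₁ n₂ n₃ r₁ r₂ r₃ : ℝ) (hu : n₁^2+n₂^2+n₃^2 = 1) (ht : n₃+1 ≠ 0) :
    r₂ = (((n₂/(n₃+1))^2 - (n₁/(n₃+1))^2 - 1)*(n₂*r₃/(n₃+1) - r₂)
      + 2*(n₁/(n₃+1))*(n₂/(n₃+1))*(n₁*r₃/(n₃+1) - r₁)
      - 2*(n₂/(n₃+1))*(-(n₁*r₁+n₂*r₂+n₃*r₃)/(n₃+1))) / ((n₁/(n₃+1))^2 + (n₂/(n₃+1))^2 + 1) := by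
  have hD : (n₁/(n₃+1))^2 + (n₂/(n₃+1))^2 + 1 ≠ 0 := by positivity
  rw [eq_div_iff hD]
  field_simp
  linear_combination (-n₂*r₃)*hu

private lemma isoRec3 (n₁ n₂ n₃ r₁ r₂ r₃ : ℝ) (hu : n₁^2+n₂^2+n₃^2 = 1) (ht : n₃+1 ≠ 0) :
    r₃ = (2*(n₁/(n₃+1))*(n₁*r₃/(n₃+1) - r₁) + 2*(n₂/(n₃+1))*(n₂*r₃/(n₃+1) - r₂)
      - 2*(-(n₁*r₁+n₂*r₂+n₃*r₃)/(n₃+1))) / ((n₁/(n₃+1))^2 + (n₂/(n₃+1))^2 + 1) := by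
  have hD : (n₁/(n₃+1))^2 + (n₂/(n₃+1))^2 + 1 ≠ 0 := by positivity
  rw [eq_div_iff hD]
  field_simp
  linear_combination (-r₃)*hu

/-- reconstruction of the contact point from the isotropic image.
If the isotropic images of the tangent planes of a parametrized surface form the graph
of a `C¹` function `f`, then the partial derivatives of `f` recover the surface point. -/
theorem stmt_16 (U V : Set (ℝ × ℝ)) (hU : IsOpen U) (hV : IsOpen V)
    (r₁ r₂ r₃ n₁ n₂ n₃ : ℝ × ℝ → ℝ) (f : ℝ × ℝ → ℝ)
    (hr₁ : ContDiffOn ℝ 1 r₁ U) (hr₂ : ContDiffOn ℝ 1 r₂ U) (hr₃ : ContDiffOn ℝ 1 r₃ U)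
    (hn₁ : ContDiffOn ℝ 1 n₁ U) (hn₂ : ContDiffOn ℝ 1 n₂ U) (hn₃ : ContDiffOn ℝ 1 n₃ U)
    (hunit : ∀ p ∈ U, (n₁ p) ^ 2 + (n₂ p) ^ 2 + (n₃ p) ^ 2 = 1)
    (hpole : ∀ p ∈ U, n₃ p ≠ -1)
    (hnormal : ∀ p ∈ U, ∀ w : ℝ × ℝ,
      n₁ p * fderiv ℝ r₁ p w + n₂ p * fderiv ℝ r₂ p w + n₃ p * fderiv ℝ r₃ p w = 0)
    (hmaps : ∀ p ∈ U, ((n₁ p / (n₃ p + 1), n₂ p / (n₃ p + 1)) : ℝ × ℝ) ∈ V)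
    (hdiffeo : ∀ p ∈ U, Function.Bijective
      (fderiv ℝ (fun q : ℝ × ℝ => ((n₁ q / (n₃ q + 1), n₂ q / (n₃ q + 1)) : ℝ × ℝ)) p))
    (hf : ContDiffOn ℝ 1 f V)
    (hgraph : ∀ p ∈ U,
      f (n₁ p / (n₃ p + 1), n₂ p / (n₃ p + 1))
        = -(n₁ p * r₁ p + n₂ p * r₂ p + n₃ p * r₃ p) / (n₃ p + 1)) :
    ∀ p ∈ U, ∀ x y : ℝ, x = n₁ p / (n₃ p + 1) → y = n₂ p / (n₃ p + 1) →
      fderiv ℝ f (x, y) (1, 0) = n₁ p * r₃ p / (n₃ p + 1) - r₁ p ∧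
      fderiv ℝ f (x, y) (0, 1) = n₂ p * r₃ p / (n₃ p + 1) - r₂ p ∧
      r₁ p = ((x ^ 2 - y ^ 2 - 1) * fderiv ℝ f (x, y) (1, 0)
          + 2 * x * y * fderiv ℝ f (x, y) (0, 1) - 2 * x * f (x, y)) / (x ^ 2 + y ^ 2 + 1) ∧
      r₂ p = ((y ^ 2 - x ^ 2 - 1) * fderiv ℝ f (x, y) (0, 1)
          + 2 * x * y * fderiv ℝ f (x, y) (1, 0) - 2 * y * f (x, y)) / (x ^ 2 + y ^ 2 + 1) ∧
      r₃ p = (2 * x * fderiv ℝ f (x, y) (1, 0) + 2 * y * fderiv ℝ f (x, y) (0, 1)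
          - 2 * f (x, y)) / (x ^ 2 + y ^ 2 + 1) := by
  intro p hp x y hx hy
  have hmem : U ∈ nhds p := hU.mem_nhds hp
  have htU : ∀ q ∈ U, n₃ q + 1 ≠ 0 := fun q hq h => hpole q hq (by linarith)
  have ht : n₃ p + 1 ≠ 0 := htU p hp
  -- basic derivatives
  have Hn₁ : HasFDerivAt n₁ (fderiv ℝ n₁ p) p :=
    ((hn₁.contDiffAt hmem).differentiableAt one_ne_zero).hasFDerivAt
  have Hn₂ : HasFDerivAt n₂ (fderiv ℝ n₂ p) p :=
    ((hn₂.contDiffAt hmem).differentiableAt one_ne_zero).hasFDerivAt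
  have Hn₃ : HasFDerivAt n₃ (fderiv ℝ n₃ p) p :=
    ((hn₃.contDiffAt hmem).differentiableAt one_ne_zero).hasFDerivAt
  have Hr₁ : HasFDerivAt r₁ (fderiv ℝ r₁ p) p :=
    ((hr₁.contDiffAt hmem).differentiableAt one_ne_zero).hasFDerivAt
  have Hr₂ : HasFDerivAt r₂ (fderiv ℝ r₂ p) p :=
    ((hr₂.contDiffAt hmem).differentiableAt one_ne_zero).hasFDerivAt
  have Hr₃ : HasFDerivAt r₃ (fderiv ℝ r₃ p) p :=
    ((hr₃.contDiffAt hmem).differentiableAt one_ne_zero).hasFDerivAt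
  have Hden : HasFDerivAt (fun q => n₃ q + 1) (fderiv ℝ n₃ p) p := Hn₃.add_const 1
  -- the two coordinates of g
  have hg₁ : DifferentiableAt ℝ (fun q => n₁ q / (n₃ q + 1)) p :=
    by simpa [div_eq_mul_inv] using Hn₁.differentiableAt.fun_mul (Hden.differentiableAt.fun_inv ht)
  have hg₂ : DifferentiableAt ℝ (fun q => n₂ q / (n₃ q + 1)) p :=
    by simpa [div_eq_mul_inv] using Hn₂.differentiableAt.fun_mul (Hden.differentiableAt.fun_inv ht)
  have Hg : HasFDerivAt (fun q : ℝ × ℝ => ((n₁ q / (n₃ q + 1), n₂ q / (n₃ q + 1)) : ℝ × ℝ))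
      ((fderiv ℝ (fun q => n₁ q / (n₃ q + 1)) p).prod
        (fderiv ℝ (fun q => n₂ q / (n₃ q + 1)) p)) p :=
    HasFDerivAt.prodMk hg₁.hasFDerivAt hg₂.hasFDerivAt
  -- derivative of the unit-normal constraint
  have hAunit : ∀ w : ℝ × ℝ, n₁ p * fderiv ℝ n₁ p w + n₂ p * fderiv ℝ n₂ p w
      + n₃ p * fderiv ℝ n₃ p w = 0 := by
    intro w
    have h1 : HasFDerivAt (fun q => n₁ q * n₁ q + n₂ q * n₂ q + n₃ q * n₃ q)
        (((n₁ p • fderiv ℝ n₁ p + n₁ p • fderiv ℝ n₁ p)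
          + (n₂ p • fderiv ℝ n₂ p + n₂ p • fderiv ℝ n₂ p))
          + (n₃ p • fderiv ℝ n₃ p + n₃ p • fderiv ℝ n₃ p)) p :=
      ((Hn₁.mul Hn₁).add (Hn₂.mul Hn₂)).add (Hn₃.mul Hn₃)
    have h2 : HasFDerivAt (fun q : ℝ × ℝ => (1 : ℝ))
        (((n₁ p • fderiv ℝ n₁ p + n₁ p • fderiv ℝ n₁ p)
          + (n₂ p • fderiv ℝ n₂ p + n₂ p • fderiv ℝ n₂ p))
          + (n₃ p • fderiv ℝ n₃ p + n₃ p • fderiv ℝ n₃ p)) p := by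
      refine h1.congr_of_eventuallyEq ?_
      filter_upwards [hmem] with q hq
      have := hunit q hq
      nlinarith [this]
    have h3 := h2.unique (hasFDerivAt_const 1 p)
    have := congrFun (congrArg DFunLike.coe h3) w
    simp only [ContinuousLinearMap.add_apply, ContinuousLinearMap.smul_apply, smul_eq_mul,
      ContinuousLinearMap.zero_apply] at this
    linarith
  -- product-rule relations for n₁ and n₂
  have e1' : ∀ w : ℝ × ℝ, fderiv ℝ n₁ p w = (n₁ p / (n₃ p + 1)) * fderiv ℝ n₃ p w
      + (n₃ p + 1) * fderiv ℝ (fun q => n₁ q / (n₃ q + 1)) p w := by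
    intro w
    have hmul : HasFDerivAt (fun q => (n₁ q / (n₃ q + 1)) * (n₃ q + 1))
        ((n₁ p / (n₃ p + 1)) • fderiv ℝ n₃ p
          + (n₃ p + 1) • fderiv ℝ (fun q => n₁ q / (n₃ q + 1)) p) p :=
      hg₁.hasFDerivAt.mul Hden
    have hev : n₁ =ᶠ[nhds p] fun q => (n₁ q / (n₃ q + 1)) * (n₃ q + 1) := by
      filter_upwards [hmem] with q hq
      exact (div_mul_cancel₀ _ (htU q hq)).symm
    have h4 := Hn₁.unique (hmul.congr_of_eventuallyEq hev)
    have := congrFun (congrArg DFunLike.coe h4) w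
    simpa [ContinuousLinearMap.add_apply, ContinuousLinearMap.smul_apply, smul_eq_mul] using this
  have e2' : ∀ w : ℝ × ℝ, fderiv ℝ n₂ p w = (n₂ p / (n₃ p + 1)) * fderiv ℝ n₃ p w
      + (n₃ p + 1) * fderiv ℝ (fun q => n₂ q / (n₃ q + 1)) p w := by
    intro w
    have hmul : HasFDerivAt (fun q => (n₂ q / (n₃ q + 1)) * (n₃ q + 1))
        ((n₂ p / (n₃ p + 1)) • fderiv ℝ n₃ p
          + (n₃ p + 1) • fderiv ℝ (fun q => n₂ q / (n₃ q + 1)) p) p :=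
      hg₂.hasFDerivAt.mul Hden
    have hev : n₂ =ᶠ[nhds p] fun q => (n₂ q / (n₃ q + 1)) * (n₃ q + 1) := by
      filter_upwards [hmem] with q hq
      exact (div_mul_cancel₀ _ (htU q hq)).symm
    have h4 := Hn₂.unique (hmul.congr_of_eventuallyEq hev)
    have := congrFun (congrArg DFunLike.coe h4) w
    simpa [ContinuousLinearMap.add_apply, ContinuousLinearMap.smul_apply, smul_eq_mul] using this
  -- differentiability of f at the image point
  have hfd : DifferentiableAt ℝ f (n₁ p / (n₃ p + 1), n₂ p / (n₃ p + 1)) :=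
    (hf.contDiffAt (hV.mem_nhds (hmaps p hp))).differentiableAt one_ne_zero
  set F := fderiv ℝ f (n₁ p / (n₃ p + 1), n₂ p / (n₃ p + 1)) with hF_def
  set G := ((fderiv ℝ (fun q => n₁ q / (n₃ q + 1)) p).prod
      (fderiv ℝ (fun q => n₂ q / (n₃ q + 1)) p)) with hG_def
  -- chain-rule relation for S
  have e6' : ∀ w : ℝ × ℝ,
      n₁ p * fderiv ℝ r₁ p w + r₁ p * fderiv ℝ n₁ p w
      + n₂ p * fderiv ℝ r₂ p w + r₂ p * fderiv ℝ n₂ p w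
      + n₃ p * fderiv ℝ r₃ p w + r₃ p * fderiv ℝ n₃ p w
      = ((n₁ p * r₁ p + n₂ p * r₂ p + n₃ p * r₃ p) / (n₃ p + 1)) * fderiv ℝ n₃ p w
        - (n₃ p + 1) * F (G w) := by
    intro w
    have HS : HasFDerivAt (fun q => n₁ q * r₁ q + n₂ q * r₂ q + n₃ q * r₃ q)
        (((n₁ p • fderiv ℝ r₁ p + r₁ p • fderiv ℝ n₁ p)
          + (n₂ p • fderiv ℝ r₂ p + r₂ p • fderiv ℝ n₂ p))
          + (n₃ p • fderiv ℝ r₃ p + r₃ p • fderiv ℝ n₃ p)) p :=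
      ((Hn₁.mul Hr₁).add (Hn₂.mul Hr₂)).add (Hn₃.mul Hr₃)
    have Hc : HasFDerivAt
        (fun q : ℝ × ℝ => -(f ((n₁ q / (n₃ q + 1), n₂ q / (n₃ q + 1)))))
        (-(F.comp G)) p := by
      exact (hfd.hasFDerivAt.comp p Hg).neg
    have Hmul2 : HasFDerivAt
        (fun q : ℝ × ℝ => (-(f ((n₁ q / (n₃ q + 1), n₂ q / (n₃ q + 1))))) * (n₃ q + 1))
        ((-(f ((n₁ p / (n₃ p + 1), n₂ p / (n₃ p + 1))))) • fderiv ℝ n₃ p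
          + (n₃ p + 1) • (-(F.comp G))) p := Hc.mul Hden
    have hev : (fun q => n₁ q * r₁ q + n₂ q * r₂ q + n₃ q * r₃ q) =ᶠ[nhds p]
        fun q : ℝ × ℝ => (-(f ((n₁ q / (n₃ q + 1), n₂ q / (n₃ q + 1))))) * (n₃ q + 1) := by
      filter_upwards [hmem] with q hq
      rw [hgraph q hq, neg_div, neg_neg, div_mul_cancel₀ _ (htU q hq)]
    have h4 := HS.unique (Hmul2.congr_of_eventuallyEq hev)
    have h5 := congrFun (congrArg DFunLike.coe h4) w
    simp only [ContinuousLinearMap.add_apply, ContinuousLinearMap.smul_apply, smul_eq_mul,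
      ContinuousLinearMap.neg_apply, ContinuousLinearMap.comp_apply] at h5
    rw [hgraph p hp] at h5
    linear_combination h5
  -- main computation of the partial derivatives of f
  have key : ∀ w : ℝ × ℝ, F (G w) = (n₁ p * (G w).1 + n₂ p * (G w).2) * r₃ p / (n₃ p + 1)
      - r₁ p * (G w).1 - r₂ p * (G w).2 := by
    intro w
    have hGw1 : (G w).1 = fderiv ℝ (fun q => n₁ q / (n₃ q + 1)) p w := rfl
    have hGw2 : (G w).2 = fderiv ℝ (fun q => n₂ q / (n₃ q + 1)) p w := rfl
    refine isoAlg1 (n₁ p) (n₂ p) (n₃ p) (r₁ p) (r₂ p) (r₃ p)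
      (fderiv ℝ n₁ p w) (fderiv ℝ n₂ p w) (fderiv ℝ n₃ p w)
      (fderiv ℝ r₁ p w) (fderiv ℝ r₂ p w) (fderiv ℝ r₃ p w)
      (F (G w)) (G w).1 (G w).2 (hunit p hp) ht ?_ ?_ (hAunit w) (hnormal p hp w) ?_
    · rw [hGw1]
      have := e1' w
      field_simp at this
      linear_combination this
    · rw [hGw2]
      have := e2' w
      field_simp at this
      linear_combination this
    · have := e6' w
      field_simp at this
      linear_combination this
  -- use surjectivity to compute F (1,0) and F (0,1)
  have hGfderiv : fderiv ℝ (fun q : ℝ × ℝ =>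
      ((n₁ q / (n₃ q + 1), n₂ q / (n₃ q + 1)) : ℝ × ℝ)) p = G := Hg.fderiv
  have hF10 : F (1, 0) = n₁ p * r₃ p / (n₃ p + 1) - r₁ p := by
    obtain ⟨w, hw⟩ := (hdiffeo p hp).2 (1, 0)
    rw [hGfderiv] at hw
    have := key w
    rw [hw] at this
    simpa using this
  have hF01 : F (0, 1) = n₂ p * r₃ p / (n₃ p + 1) - r₂ p := by
    obtain ⟨w, hw⟩ := (hdiffeo p hp).2 (0, 1)
    rw [hGfderiv] at hw
    have := key w
    rw [hw] at this
    simpa using this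
  subst hx hy
  refine ⟨hF10, hF01, ?_, ?_, ?_⟩
  · rw [hF10, hF01, hgraph p hp]
    exact isoRec1 (n₁ p) (n₂ p) (n₃ p) (r₁ p) (r₂ p) (r₃ p) (hunit p hp) ht
  · rw [hF10, hF01, hgraph p hp]
    exact isoRec2 (n₁ p) (n₂ p) (n₃ p) (r₁ p) (r₂ p) (r₃ p) (hunit p hp) ht
  · rw [hF10, hF01, hgraph p hp]
    exact isoRec3 (n₁ p) (n₂ p) (n₃ p) (r₁ p) (r₂ p) (r₃ p) (hunit p hp) ht
end

section
/- Consider the conic t ↦ (x + v sin t + u(1-cos t), y - u sin t + v(1-cos t), z + a sin t + b(1-cos t)) with a, b, z given by z = f(x,y), a = f_x v - f_y u, b = f_x u + f_y v + f_xx v² - 2 f_xy uv + f_yy u² for a C² function f and (u,v) ≠ (0,0) with x² + y² + 1 + 2xu + 2yv = 0. Then the plane containing the conic passes through the point (0,0,R) if and only if 2(u²+v²)(f - x f_x - y f_y - R) + (x²+y²+1)(f_xx v² - 2 f_xy uv + f_yy u²) = 0. -/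
open Real Set

/-- for the osculating conic with `z, a, b` given by the osculation
formulas and top view condition `x² + y² + 1 + 2xu + 2yv = 0`, the plane of the conic
passes through `(0,0,R)` iff
`2(u²+v²)(f - x f_x - y f_y - R) + (x²+y²+1)(f_xx v² - 2 f_xy uv + f_yy u²) = 0`. -/
theorem stmt_17 (f : ℝ → ℝ → ℝ) (x y z a b u v R : ℝ)
    (hf : ContDiffAt ℝ 2 (fun p : ℝ × ℝ => f p.1 p.2) (x, y))
    (huv : (u, v) ≠ ((0 : ℝ), (0 : ℝ)))
    (htop : x ^ 2 + y ^ 2 + 1 + 2 * x * u + 2 * y * v = 0)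
    (hz : z = f x y)
    (ha : a = pdx f x y * v - pdy f x y * u)
    (hb : b = pdx f x y * u + pdy f x y * v
        + pdx (pdx f) x y * v ^ 2 - 2 * pdy (pdx f) x y * u * v + pdy (pdy f) x y * u ^ 2) :
    (∃ A B : ℝ, ∀ t : ℝ,
        z + a * Real.sin t + b * (1 - Real.cos t)
          = A * (x + v * Real.sin t + u * (1 - Real.cos t))
            + B * (y - u * Real.sin t + v * (1 - Real.cos t)) + R)
    ↔ 2 * (u ^ 2 + v ^ 2) * (f x y - x * pdx f x y - y * pdy f x y - R)
        + (x ^ 2 + y ^ 2 + 1)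
          * (pdx (pdx f) x y * v ^ 2 - 2 * pdy (pdx f) x y * u * v
              + pdy (pdy f) x y * u ^ 2) = 0 := by
  set p := pdx f x y with hp
  set q := pdy f x y with hq
  set W := pdx (pdx f) x y * v ^ 2 - 2 * pdy (pdx f) x y * u * v + pdy (pdy f) x y * u ^ 2
    with hW
  have hs : u ^ 2 + v ^ 2 ≠ 0 := by
    intro h
    apply huv
    have hu : u = 0 := by nlinarith [sq_nonneg u, sq_nonneg v]
    have hv : v = 0 := by nlinarith [sq_nonneg u, sq_nonneg v]
    rw [hu, hv]
  constructor
  · rintro ⟨A, B, hAB⟩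
    have h0 := hAB 0
    have h1 := hAB (Real.pi / 2)
    have h2 := hAB (-(Real.pi / 2))
    simp only [Real.sin_zero, Real.cos_zero, Real.sin_pi_div_two, Real.cos_pi_div_two,
      Real.sin_neg, Real.cos_neg] at h0 h1 h2
    have e1 : a = A * v - B * u := by linear_combination h1 / 2 - h2 / 2
    have e2 : b = A * u + B * v := by linear_combination h1 / 2 + h2 / 2 - h0
    have h0' : z = A * x + B * y + R := by linear_combination h0
    linear_combination (-(2 * (u ^ 2 + v ^ 2))) * hz + (2 * (u ^ 2 + v ^ 2)) * h0'
      + W * htop - (2 * (x * u + y * v)) * e2 + (2 * (x * u + y * v)) * hb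
      + (2 * (x * v - y * u)) * ha - (2 * (x * v - y * u)) * e1
  · intro hcond
    refine ⟨p + u * W / (u ^ 2 + v ^ 2), q + v * W / (u ^ 2 + v ^ 2), fun t => ?_⟩
    have e0 : z = (p + u * W / (u ^ 2 + v ^ 2)) * x + (q + v * W / (u ^ 2 + v ^ 2)) * y + R := by
      field_simp
      linear_combination (u ^ 2 + v ^ 2) * hz + hcond / 2 - W / 2 * htop
    have e1 : a = (p + u * W / (u ^ 2 + v ^ 2)) * v - (q + v * W / (u ^ 2 + v ^ 2)) * u := by
      field_simp
      linear_combination (u ^ 2 + v ^ 2) * ha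
    have e2 : b = (p + u * W / (u ^ 2 + v ^ 2)) * u + (q + v * W / (u ^ 2 + v ^ 2)) * v := by
      field_simp
      linear_combination (u ^ 2 + v ^ 2) * hb
    linear_combination e0 + Real.sin t * e1 + (1 - Real.cos t) * e2
end
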